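/- arXiv:0911.0342 — 6 statements merged into one kernel-verified Lean document; each statement's English description precedes it below -/
import Mathlib

section
/- If λ is a broken partition (i.e., there exist indices 1 < c < d with λ_{c-1} - λ_c > 1 and λ_{d-1} = λ_d > 0), then the conjugate partition λ' is also broken. -/
/-- A partition: weakly decreasing sequence of non-negative integers (indexed from 1,
with the convention `μ 0 = 0`), with finitely many nonzero terms. -/
def IsPartition (μ : ℕ → ℕ) : Prop :=
  μ 0 = 0 ∧ (∀ i, 1 ≤ i → μ (i + 1) ≤ μ i) ∧ ∃ N, ∀ i, N ≤ i → μ i = 0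

/-- The conjugate partition: `conj μ j = |{i ≥ 1 : μ i ≥ j}|`. -/
noncomputable def conj (μ : ℕ → ℕ) (j : ℕ) : ℕ :=
  Nat.card {i : ℕ // 1 ≤ i ∧ j ≤ μ i}

/-- `(i,j)` is a node of the Young diagram of `μ`. -/
def IsNode (μ : ℕ → ℕ) (i j : ℕ) : Prop := 1 ≤ i ∧ 1 ≤ j ∧ j ≤ μ i

/-- The hook length `h_μ(i,j) = 1 + μ_i - j + μ'_j - i` (as an integer). -/
noncomputable def hook (μ : ℕ → ℕ) (i j : ℕ) : ℤ :=
  1 + (μ i : ℤ) - (j : ℤ) + (conj μ j : ℤ) - (i : ℤ)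

/-- `μ` is broken: there exist `1 < c < d` with `μ_{c-1} - μ_c > 1` and `μ_{d-1} = μ_d > 0`. -/
def Broken (μ : ℕ → ℕ) : Prop :=
  ∃ c d : ℕ, 1 < c ∧ c < d ∧ μ c + 1 < μ (c - 1) ∧ μ (d - 1) = μ d ∧ 0 < μ d

/-- `μ` is 2-singular: some `μ_i = μ_{i+1} > 0` (with `i ≥ 1`). -/
def TwoSingular (μ : ℕ → ℕ) : Prop := ∃ i : ℕ, 1 ≤ i ∧ μ i = μ (i + 1) ∧ 0 < μ i

/-- `μ` is an `e`-core: no hook length is divisible by `e`. -/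
def IsECore (e : ℕ) (μ : ℕ → ℕ) : Prop :=
  ∀ i j : ℕ, IsNode μ i j → ¬ (e : ℤ) ∣ hook μ i j

/-- `μ` is an `e`-JM partition. -/
def IsJM (e : ℕ) (μ : ℕ → ℕ) : Prop :=
  ∀ i j : ℕ, IsNode μ i j → (e : ℤ) ∣ hook μ i j →
    (∀ k, 1 ≤ k → k ≤ μ i → (e : ℤ) ∣ hook μ i k) ∨
    (∀ k, 1 ≤ k → k ≤ conj μ j → (e : ℤ) ∣ hook μ k j)

lemma mu_anti {μ : ℕ → ℕ} (hμ : IsPartition μ) :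
    ∀ a b, 1 ≤ a → a ≤ b → μ b ≤ μ a := by
  intro a b ha hab
  induction b with
  | zero => omega
  | succ n ih =>
    rcases Nat.lt_or_ge a (n+1) with h1 | h1
    · exact le_trans (hμ.2.1 n (by omega)) (ih (by omega))
    · have : a = n + 1 := by omega
      subst this; rfl

lemma conj_set_eq (μ : ℕ → ℕ) (j : ℕ) :
    conj μ j = Set.ncard {i : ℕ | 1 ≤ i ∧ j ≤ μ i} := by
  rw [conj, ← Nat.card_coe_set_eq]
  rfl

lemma conj_le {μ : ℕ → ℕ} (hμ : IsPartition μ) {i j : ℕ} (hi : 1 ≤ i)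
    (hij : μ i < j) : conj μ j ≤ i - 1 := by
  rw [conj_set_eq]
  have hsub : {x : ℕ | 1 ≤ x ∧ j ≤ μ x} ⊆ Set.Icc 1 (i - 1) := by
    intro x ⟨hx1, hx2⟩
    refine ⟨hx1, ?_⟩
    by_contra hc
    have hxi : i ≤ x := by omega
    have := mu_anti hμ i x hi hxi
    omega
  calc Set.ncard {x : ℕ | 1 ≤ x ∧ j ≤ μ x}
      ≤ (Set.Icc 1 (i-1)).ncard := Set.ncard_le_ncard hsub (Set.finite_Icc _ _)
    _ = i - 1 := by rw [← Finset.coe_Icc, Set.ncard_coe_finset, Nat.card_Icc]; omega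

lemma conj_ge {μ : ℕ → ℕ} (hμ : IsPartition μ) {i j : ℕ} (hi : 1 ≤ i)
    (hj : 1 ≤ j) (hij : j ≤ μ i) : i ≤ conj μ j := by
  obtain ⟨N, hN⟩ := hμ.2.2
  rw [conj_set_eq]
  have hfin : ({x : ℕ | 1 ≤ x ∧ j ≤ μ x}).Finite := by
    apply Set.Finite.subset (Set.finite_Icc 1 N)
    intro x ⟨hx1, hx2⟩
    refine ⟨hx1, ?_⟩
    by_contra hc
    have := hN x (by omega)
    omega
  have hsub : Set.Icc 1 i ⊆ {x : ℕ | 1 ≤ x ∧ j ≤ μ x} := by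
    intro x ⟨hx1, hx2⟩
    exact ⟨hx1, le_trans hij (mu_anti hμ x i hx1 hx2)⟩
  calc i = (Set.Icc 1 i).ncard := by rw [← Finset.coe_Icc, Set.ncard_coe_finset, Nat.card_Icc]; omega
    _ ≤ _ := Set.ncard_le_ncard hsub hfin

/-- If `μ` is a broken partition, then its conjugate `μ'` is also broken. -/
theorem broken_conj (μ : ℕ → ℕ) (hμ : IsPartition μ) (h : Broken μ) :
    Broken (conj μ) := by
  obtain ⟨c, d, hc1, hcd, hgap, hrep, hpos⟩ := h
  have hdc : μ d ≤ μ c := mu_anti hμ c d (by omega) (by omega)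
  refine ⟨μ d + 1, μ c + 2, by omega, by omega, ?_, ?_, ?_⟩
  · -- conj (μ d + 1) + 1 < conj (μ d)
    have h1 : d ≤ conj μ (μ d) := conj_ge hμ (by omega) hpos le_rfl
    have h2 : conj μ (μ d + 1) ≤ (d - 1) - 1 :=
      conj_le hμ (i := d - 1) (by omega) (by omega)
    simp only [Nat.add_sub_cancel]
    omega
  · -- conj (μ c + 1) = conj (μ c + 2)
    have hle1 : conj μ (μ c + 1) ≤ c - 1 := conj_le hμ (by omega) (by omega)
    have hle2 : conj μ (μ c + 2) ≤ c - 1 := conj_le hμ (by omega) (by omega)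
    have hge1 : c - 1 ≤ conj μ (μ c + 1) :=
      conj_ge hμ (by omega) (by omega) (by omega)
    have hge2 : c - 1 ≤ conj μ (μ c + 2) :=
      conj_ge hμ (by omega) (by omega) (by omega)
    have e : μ c + 2 - 1 = μ c + 1 := rfl
    rw [e]
    omega
  · -- 0 < conj (μ c + 2)
    have hge2 : c - 1 ≤ conj μ (μ c + 2) :=
      conj_ge hμ (by omega) (by omega) (by omega)
    omega
end

section
/- Suppose λ is an unbroken doubly-singular partition (both λ and λ' are 2-singular) that is a (2p)-JM partition for a prime p. Then λ is a 2p-core, i.e., no hook length of λ is divisible by 2p. -/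
/-- A partition is weakly decreasing on indices `≥ 1`. -/
lemma part_anti {μ : ℕ → ℕ} (hμ : IsPartition μ) {a b : ℕ} (ha : 1 ≤ a) (hab : a ≤ b) :
    μ b ≤ μ a := by
  obtain ⟨k, rfl⟩ : ∃ k, b = a + k := ⟨b - a, by omega⟩
  clear hab
  induction k with
  | zero => simp
  | succ k ih => exact le_trans (hμ.2.1 (a + k) (by omega)) ih

/-- The fundamental property of the conjugate. -/
lemma conj_iff {μ : ℕ → ℕ} (hμ : IsPartition μ) {i j : ℕ} (hi : 1 ≤ i) (hj : 1 ≤ j) :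
    j ≤ μ i ↔ i ≤ conj μ j := by
  obtain ⟨N, hN⟩ := hμ.2.2
  set S : Set ℕ := {x | 1 ≤ x ∧ j ≤ μ x} with hS
  have hfin : S.Finite := by
    apply (Set.finite_Icc 1 N).subset
    rintro x ⟨hx1, hx2⟩
    refine ⟨hx1, ?_⟩
    by_contra h
    have := hN x (by omega)
    omega
  have hcard : conj μ j = S.ncard := Nat.card_coe_set_eq S
  have hIcc : ∀ a b : ℕ, (Set.Icc a b).ncard = b + 1 - a := by
    intro a b
    rw [← Finset.coe_Icc, Set.ncard_coe_finset, Nat.card_Icc]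
  constructor
  · intro h
    have hsub : Set.Icc 1 i ⊆ S := by
      rintro x ⟨hx1, hx2⟩
      exact ⟨hx1, le_trans h (part_anti hμ hx1 hx2)⟩
    have hle := Set.ncard_le_ncard hsub hfin
    rw [hIcc] at hle
    omega
  · intro h
    by_contra hcon
    push_neg at hcon
    have hsub : S ⊆ Set.Icc 1 (i - 1) := by
      rintro x ⟨hx1, hx2⟩
      refine ⟨hx1, ?_⟩
      by_contra hx
      push_neg at hx
      have := part_anti hμ hi (show i ≤ x by omega)
      omega
    have hle := Set.ncard_le_ncard hsub (Set.finite_Icc _ _)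
    rw [hIcc] at hle
    omega

/-- The conjugate is weakly decreasing on indices `≥ 1`. -/
lemma conj_le_s5 {μ : ℕ → ℕ} (hμ : IsPartition μ) {j k : ℕ} (hj : 1 ≤ j) (hjk : j ≤ k) :
    conj μ k ≤ conj μ j := by
  rcases Nat.eq_zero_or_pos (conj μ k) with h | h
  · omega
  · have h1 : k ≤ μ (conj μ k) := (conj_iff hμ h (by omega)).mpr le_rfl
    exact (conj_iff hμ h hj).mp (le_trans hjk h1)

/-- An unbroken doubly-singular `(2p)`-JM partition is a `2p`-core. -/
theorem core_of_unbroken_doublySingular_JM (μ : ℕ → ℕ) (p : ℕ)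
    (hμ : IsPartition μ) (hp : p.Prime)
    (h1 : TwoSingular μ) (h2 : TwoSingular (conj μ))
    (hub : ¬ Broken μ) (hjm : IsJM (2 * p) μ) :
    IsECore (2 * p) μ := by
  intro i j hnode hdvd
  obtain ⟨hi, hj, hij⟩ := hnode
  have hp2 : 2 ≤ p := hp.two_le
  obtain row | col := hjm i j ⟨hi, hj, hij⟩ hdvd
  · -- row case: all hooks in row i divisible
    obtain ⟨b, hb1, hbeq, hbpos⟩ := h2
    set m := conj μ b with hm
    have hm1 : 1 ≤ m := hbpos
    have hμm : b + 1 ≤ μ m := (conj_iff hμ hm1 (by omega)).mpr hbeq.le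
    have hμm1 : μ (m + 1) < b := by
      by_contra h
      push_neg at h
      have := (conj_iff hμ (show 1 ≤ m + 1 by omega) hb1).mp h
      omega
    have hd1pos : i ≤ conj μ 1 := (conj_iff hμ hi le_rfl).mp (by omega)
    by_cases h2i : 2 ≤ μ i
    · -- λ_i ≥ 2 : columns 1 and 2 give a big jump in conj
      have e1 := row 1 le_rfl (by omega)
      have e2 := row 2 (by omega) h2i
      have hdd : conj μ 2 ≤ conj μ 1 := conj_le_s5 hμ le_rfl (by omega)
      have hdvd12 : (2 * p : ℤ) ∣ (1 + (conj μ 1 : ℤ) - (conj μ 2 : ℤ)) := by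
        have hsub := dvd_sub e1 e2
        have heq : hook μ i 1 - hook μ i 2 = 1 + (conj μ 1 : ℤ) - (conj μ 2 : ℤ) := by
          unfold hook; push_cast; ring
        rwa [heq] at hsub
      have hge : (2 * p : ℤ) ≤ 1 + (conj μ 1 : ℤ) - (conj μ 2 : ℤ) :=
        Int.le_of_dvd (by push_cast; omega) hdvd12
      have hgap : conj μ 2 + 2 * p ≤ conj μ 1 + 1 := by push_cast at hge; omega
      have hm2 : m ≤ conj μ 2 := (conj_iff hμ hm1 (by omega)).mp (by omega)
      have hc1 : 1 ≤ conj μ 1 := by omega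
      have hv1 : 1 ≤ μ (conj μ 1) := (conj_iff hμ hc1 le_rfl).mpr le_rfl
      have hv2 : μ (conj μ 1) < 2 := by
        by_contra h; push_neg at h
        have := (conj_iff hμ hc1 le_rfl).mp (by omega : 1 ≤ μ (conj μ 1))
        have := (conj_iff hμ hc1 (by omega : (1:ℕ) ≤ 2)).mp h
        omega
      have hw1 : 1 ≤ μ (conj μ 1 - 1) :=
        (conj_iff hμ (show 1 ≤ conj μ 1 - 1 by omega) le_rfl).mpr (by omega)
      have hw2 : μ (conj μ 1 - 1) < 2 := by
        by_contra h; push_neg at h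
        have := (conj_iff hμ (show 1 ≤ conj μ 1 - 1 by omega) (by omega : (1:ℕ) ≤ 2)).mp h
        omega
      exact hub ⟨m + 1, conj μ 1, by omega, by omega,
        by simp only [Nat.add_sub_cancel]; omega, by omega, by omega⟩
    · -- λ_i = 1
      have hμi : μ i = 1 := by omega
      have hj1 : j = 1 := by omega
      subst hj1
      have heq : hook μ i 1 = 1 + (conj μ 1 : ℤ) - (i : ℤ) := by
        unfold hook; rw [hμi]; push_cast; ring
      have hge : (2 * p : ℤ) ≤ 1 + (conj μ 1 : ℤ) - (i : ℤ) :=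
        Int.le_of_dvd (by push_cast; omega) (heq ▸ hdvd)
      have hge' : i + 2 * p ≤ conj μ 1 + 1 := by push_cast at hge; omega
      have hmi : m < i := by
        by_contra h; push_neg at h
        have := part_anti hμ hi h
        omega
      have hdv : μ (conj μ 1) ≤ 1 := by
        have := part_anti hμ hi (show i ≤ conj μ 1 by omega)
        omega
      have hdv1 : 1 ≤ μ (conj μ 1) :=
        (conj_iff hμ (show 1 ≤ conj μ 1 by omega) le_rfl).mpr le_rfl
      have hw : μ (conj μ 1 - 1) ≤ 1 := by
        have := part_anti hμ hi (show i ≤ conj μ 1 - 1 by omega)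
        omega
      have hw1 : 1 ≤ μ (conj μ 1 - 1) :=
        (conj_iff hμ (show 1 ≤ conj μ 1 - 1 by omega) le_rfl).mpr (by omega)
      exact hub ⟨m + 1, conj μ 1, by omega, by omega,
        by simp only [Nat.add_sub_cancel]; omega, by omega, by omega⟩
  · -- column case: all hooks in column j divisible
    have hicj : i ≤ conj μ j := (conj_iff hμ hi hj).mp hij
    obtain ⟨a, ha1, haeq, hapos⟩ := h1
    have h21 : (2:ℕ) - 1 = 1 := rfl
    by_cases h2c : 2 ≤ conj μ j
    · have e1 := col 1 le_rfl (by omega)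
      have e2 := col 2 (by omega) h2c
      have hmono : μ 2 ≤ μ 1 := part_anti hμ le_rfl (by omega)
      have hdvd12 : (2 * p : ℤ) ∣ (1 + (μ 1 : ℤ) - (μ 2 : ℤ)) := by
        have hsub := dvd_sub e1 e2
        have heq : hook μ 1 j - hook μ 2 j = 1 + (μ 1 : ℤ) - (μ 2 : ℤ) := by
          unfold hook; push_cast; ring
        rwa [heq] at hsub
      have hge : (2 * p : ℤ) ≤ 1 + (μ 1 : ℤ) - (μ 2 : ℤ) :=
        Int.le_of_dvd (by push_cast; omega) hdvd12
      have hge' : μ 2 + 2 * p ≤ μ 1 + 1 := by push_cast at hge; omega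
      have ha2 : 2 ≤ a := by
        by_contra h
        have : a = 1 := by omega
        subst this
        simp only [show (1:ℕ)+1 = 2 from rfl] at haeq
        omega
      exact hub ⟨2, a + 1, by omega, by omega, by rw [h21]; omega,
        by simp only [Nat.add_sub_cancel]; omega, by omega⟩
    · have hcj1 : conj μ j = 1 := by omega
      have hi1 : i = 1 := by omega
      subst hi1
      have heq : hook μ 1 j = 1 + (μ 1 : ℤ) - (j : ℤ) := by
        unfold hook; rw [hcj1]; push_cast; ring
      have hge : (2 * p : ℤ) ≤ 1 + (μ 1 : ℤ) - (j : ℤ) :=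
        Int.le_of_dvd (by push_cast; omega) (heq ▸ hdvd)
      have hge' : j + 2 * p ≤ μ 1 + 1 := by push_cast at hge; omega
      have hμ2 : μ 2 < j := by
        by_contra h; push_neg at h
        have : 2 ≤ conj μ j := (conj_iff hμ (by omega : (1:ℕ) ≤ 2) hj).mp h
        omega
      have ha2 : 2 ≤ a := by
        by_contra h
        have : a = 1 := by omega
        subst this
        simp only [show (1:ℕ)+1 = 2 from rfl] at haeq
        omega
      exact hub ⟨2, a + 1, by omega, by omega, by rw [h21]; omega,
        by simp only [Nat.add_sub_cancel]; omega, by omega⟩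
end

section
/- Let λ be a 2-singular partition and let a be maximal such that λ_{a-1} = λ_a > 0. Then for every k with 1 ≤ k ≤ λ_a, the set {h_λ(a-1,j) : k ≤ j ≤ λ_a} ∪ {h_λ(a,j) : k ≤ j ≤ λ_a} equals the interval {1, 2, ..., l} for some l ≥ λ_a - k + 2. -/
lemma mono_of_partition {μ : ℕ → ℕ} (hμ : IsPartition μ) (i i' : ℕ)
    (hi : 1 ≤ i) (hii : i ≤ i') : μ i' ≤ μ i := by
  obtain ⟨d, rfl⟩ := Nat.exists_eq_add_of_le hii
  induction d with
  | zero => simp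
  | succ n ih =>
    have h2 := hμ.2.1 (i + n) (by omega)
    have h3 : i + (n + 1) = (i + n) + 1 := by omega
    rw [h3]
    exact le_trans h2 (ih (by omega))

lemma conj_eq {μ : ℕ → ℕ} (hμ : IsPartition μ) (j m : ℕ) (hm : 1 ≤ m)
    (h1 : j ≤ μ m) (h2 : μ (m+1) < j) : conj μ j = m := by
  have hset : {i : ℕ | 1 ≤ i ∧ j ≤ μ i} = Set.Icc 1 m := by
    ext i
    simp only [Set.mem_setOf_eq, Set.mem_Icc]
    constructor
    · rintro ⟨hi1, hij⟩
      refine ⟨hi1, ?_⟩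
      by_contra h
      push_neg at h
      have := mono_of_partition hμ (m+1) i (by omega) h
      omega
    · rintro ⟨hi1, him⟩
      exact ⟨hi1, le_trans h1 (mono_of_partition hμ i m hi1 him)⟩
  have h4 : conj μ j = Nat.card (Set.Icc 1 m) := Nat.card_congr (Equiv.setCongr hset)
  rw [h4, Nat.card_coe_set_eq, ← Finset.coe_Icc, Set.ncard_coe_finset, Nat.card_Icc]
  omega

lemma exists_m {μ : ℕ → ℕ} (hμ : IsPartition μ) (a j : ℕ) (ha : 1 ≤ a)
    (hj1 : 1 ≤ j) (hja : j ≤ μ a) : ∃ m, a ≤ m ∧ j ≤ μ m ∧ μ (m+1) < j := by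
  obtain ⟨N, hN⟩ := hμ.2.2
  have hP : ∃ m, a ≤ m ∧ μ (m+1) < j := by
    refine ⟨max a N, le_max_left _ _, ?_⟩
    have := hN (max a N + 1) (by omega)
    omega
  classical
  set m0 := Nat.find hP with hm0
  obtain ⟨hma, hmlt⟩ := Nat.find_spec hP
  refine ⟨m0, hma, ?_, hmlt⟩
  rcases Nat.eq_or_lt_of_le hma with h | h
  · show j ≤ μ (Nat.find hP); rw [← h]; exact hja
  · have hmin := Nat.find_min hP (show m0 - 1 < m0 by omega)
    push_neg at hmin
    have := hmin (by omega)
    have h5 : m0 - 1 + 1 = m0 := by omega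
    rw [h5] at this
    omega

/-- If `a` is maximal with `μ_{a-1} = μ_a > 0`, then for `1 ≤ k ≤ μ_a`, the set of hook
lengths `{h_μ(a-1,j), h_μ(a,j) : k ≤ j ≤ μ_a}` is an interval `{1,…,l}` with
`l ≥ μ_a - k + 2`. -/
theorem hooks_form_interval (μ : ℕ → ℕ) (a : ℕ) (hμ : IsPartition μ)
    (ha2 : 2 ≤ a) (hrep : μ (a - 1) = μ a ∧ 0 < μ a)
    (hmax : ∀ i, a < i → ¬ (μ (i - 1) = μ i ∧ 0 < μ i))
    (k : ℕ) (hk1 : 1 ≤ k) (hk2 : k ≤ μ a) :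
    ∃ l : ℕ, μ a - k + 2 ≤ l ∧
      {h : ℤ | ∃ j : ℕ, k ≤ j ∧ j ≤ μ a ∧ (h = hook μ (a - 1) j ∨ h = hook μ a j)}
        = {h : ℤ | 1 ≤ h ∧ h ≤ (l : ℤ)} := by
  obtain ⟨hrep1, hrep2⟩ := hrep
  have ha1 : 1 ≤ a := by omega
  -- conjugate at μ a is a
  have hlt : μ (a + 1) < μ a := by
    have h := hmax (a + 1) (by omega)
    have h2 := hμ.2.1 a (by omega)
    simp only [Nat.add_sub_cancel] at h
    by_contra hc
    exact h ⟨by omega, by omega⟩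
  have hconjM : conj μ (μ a) = a := conj_eq hμ (μ a) a ha1 le_rfl hlt
  -- conjugate bounds for 1 ≤ j ≤ μ a
  have hconj_ge : ∀ j, 1 ≤ j → j ≤ μ a → a ≤ conj μ j := by
    intro j hj1 hj2
    obtain ⟨m, hm1, hm2, hm3⟩ := exists_m hμ a j ha1 hj1 hj2
    rw [conj_eq hμ j m (by omega) hm2 hm3]
    exact hm1
  -- conj step
  have hstep : ∀ j, 1 ≤ j → j + 1 ≤ μ a →
      conj μ (j+1) ≤ conj μ j ∧ conj μ j ≤ conj μ (j+1) + 1 := by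
    intro j hj1 hj2
    obtain ⟨m1, hm11, hm12, hm13⟩ := exists_m hμ a (j+1) ha1 (by omega) hj2
    obtain ⟨m0, hm01, hm02, hm03⟩ := exists_m hμ a j ha1 hj1 (by omega)
    rw [conj_eq hμ (j+1) m1 (by omega) hm12 hm13, conj_eq hμ j m0 (by omega) hm02 hm03]
    constructor
    · by_contra hc
      push_neg at hc
      have := mono_of_partition hμ (m0 + 1) m1 (by omega) (by omega)
      omega
    · by_contra hc
      push_neg at hc
      -- m0 ≥ m1 + 2
      have h1 : μ (m0 - 1) ≤ μ (m1 + 1) := mono_of_partition hμ (m1+1) (m0-1) (by omega) (by omega)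
      have h2 : μ m0 ≤ μ (m0 - 1) := by
        have := mono_of_partition hμ (m0 - 1) m0 (by omega) (by omega)
        exact this
      have := hmax m0 (by omega)
      exact this ⟨by omega, by omega⟩
  -- hook relations
  have hhook1 : ∀ j : ℕ, hook μ (a-1) j = hook μ a j + 1 := by
    intro j
    unfold hook
    rw [hrep1]
    have : ((a - 1 : ℕ) : ℤ) = (a : ℤ) - 1 := by
      rw [Nat.cast_sub (by omega)]; simp
    rw [this]; ring
  -- main claim by induction
  have key : ∀ t k', 1 ≤ k' → k' + t = μ a →
      {h : ℤ | ∃ j : ℕ, k' ≤ j ∧ j ≤ μ a ∧ (h = hook μ (a - 1) j ∨ h = hook μ a j)}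
        = {h : ℤ | 1 ≤ h ∧ h ≤ hook μ (a-1) k'} := by
    intro t
    induction t with
    | zero =>
      intro k' hk'1 hk't
      have hk' : k' = μ a := by omega
      subst hk'
      ext h
      simp only [Set.mem_setOf_eq]
      have hA : hook μ a (μ a) = 1 := by
        unfold hook; rw [hconjM]; ring
      have hB : hook μ (a-1) (μ a) = 2 := by rw [hhook1, hA]; norm_num
      constructor
      · rintro ⟨j, hj1, hj2, hj3⟩
        have : j = μ a := by omega
        subst this
        rcases hj3 with h3 | h3
        · rw [h3, hB]; norm_num
        · rw [h3, hA, hB]; norm_num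
      · rintro ⟨h1, h2⟩
        refine ⟨μ a, le_rfl, le_rfl, ?_⟩
        rw [hB] at h2
        rw [hA]
        omega
    | succ t ih =>
      intro k' hk'1 hk't
      have hIH := ih (k'+1) (by omega) (by omega)
      have hs := hstep k' hk'1 (by omega)
      have hHa : hook μ a k' = 1 + (μ a : ℤ) - k' + (conj μ k' : ℤ) - a := by
        unfold hook; ring
      have hHa1 : hook μ a (k'+1) = 1 + (μ a : ℤ) - (k'+1) + (conj μ (k'+1) : ℤ) - a := by
        unfold hook; push_cast; ring
      have hge : a ≤ conj μ k' := hconj_ge k' hk'1 (by omega)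
      have hH1 := hhook1 k'
      have hH2 := hhook1 (k'+1)
      ext h
      simp only [Set.mem_setOf_eq]
      constructor
      · rintro ⟨j, hj1, hj2, hj3⟩
        rcases Nat.eq_or_lt_of_le hj1 with he | he
        · subst he
          rcases hj3 with h3 | h3 <;> subst h3 <;> omega
        · have : h ∈ {h : ℤ | 1 ≤ h ∧ h ≤ hook μ (a-1) (k'+1)} := by
            rw [← hIH]
            exact ⟨j, by omega, hj2, hj3⟩
          simp only [Set.mem_setOf_eq] at this
          omega
      · rintro ⟨h1, h2⟩
        by_cases hc : h ≤ hook μ (a-1) (k'+1)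
        · have : h ∈ {h : ℤ | ∃ j : ℕ, k'+1 ≤ j ∧ j ≤ μ a ∧
              (h = hook μ (a - 1) j ∨ h = hook μ a j)} := by
            rw [hIH]; exact ⟨h1, hc⟩
          obtain ⟨j, hj1, hj2, hj3⟩ := this
          exact ⟨j, by omega, hj2, hj3⟩
        · push_neg at hc
          refine ⟨k', le_rfl, by omega, ?_⟩
          omega
  have keyk := key (μ a - k) k hk1 (by omega)
  have hge : a ≤ conj μ k := hconj_ge k hk1 hk2
  have hHk : hook μ (a-1) k = 2 + (μ a : ℤ) - k + (conj μ k : ℤ) - a := by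
    rw [hhook1]; unfold hook; ring
  refine ⟨(hook μ (a-1) k).toNat, ?_, ?_⟩
  · have hcast : ((hook μ (a-1) k).toNat : ℤ) = hook μ (a-1) k := by
      rw [Int.toNat_of_nonneg]
      rw [hHk]
      have : (k : ℤ) ≤ (μ a : ℤ) := by exact_mod_cast hk2
      have : (a : ℤ) ≤ (conj μ k : ℤ) := by exact_mod_cast hge
      omega
    have h2 : ((μ a - k + 2 : ℕ) : ℤ) ≤ ((hook μ (a-1) k).toNat : ℤ) := by
      rw [hcast, hHk]
      push_cast [Nat.cast_sub hk2]
      have : (a : ℤ) ≤ (conj μ k : ℤ) := by exact_mod_cast hge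
      omega
    exact_mod_cast h2
  · rw [keyk]
    have hcast : ((hook μ (a-1) k).toNat : ℤ) = hook μ (a-1) k := by
      rw [Int.toNat_of_nonneg]
      rw [hHk]
      have h1 : (k : ℤ) ≤ (μ a : ℤ) := by exact_mod_cast hk2
      have h2 : (a : ℤ) ≤ (conj μ k : ℤ) := by exact_mod_cast hge
      omega
    rw [hcast]
end

section
/- Let λ be a 2-singular partition, a maximal with λ_{a-1} = λ_a > 0, and e > 1. If λ is an e-core (no hook length divisible by e), then λ_a ≤ e - 2. -/
/-- If `μ` is 2-singular with `a` maximal such that `μ_{a-1} = μ_a > 0`, and `μ` is an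
`e`-core with `e > 1`, then `μ_a ≤ e - 2`. -/
theorem repeated_part_le_of_core (μ : ℕ → ℕ) (a e : ℕ) (hμ : IsPartition μ)
    (ha2 : 2 ≤ a) (hrep : μ (a - 1) = μ a ∧ 0 < μ a)
    (hmax : ∀ i, a < i → ¬ (μ (i - 1) = μ i ∧ 0 < μ i))
    (he : 1 < e) (hcore : IsECore e μ) :
    μ a ≤ e - 2 := by
  obtain ⟨hrep1, hrep2⟩ := hrep
  obtain ⟨h0, hdec, N, hN⟩ := hμ
  -- μ is weakly decreasing on indices ≥ 1
  have anti : ∀ i j : ℕ, 1 ≤ i → i ≤ j → μ j ≤ μ i := by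
    intro i j hi hij
    have key : ∀ k : ℕ, μ (i + k) ≤ μ i := by
      intro k
      induction k with
      | zero => exact le_rfl
      | succ k ih => exact le_trans (hdec (i + k) (by omega)) ih
    have : j = i + (j - i) := by omega
    rw [this]; exact key _
  set S : ℕ → Set ℕ := fun j => {i : ℕ | 1 ≤ i ∧ j ≤ μ i} with hS
  have hconj : ∀ j, conj μ j = (S j).ncard := fun j => Nat.card_coe_set_eq _
  have hfin : ∀ j, 1 ≤ j → (S j).Finite := by
    intro j hj
    apply Set.Finite.subset (Set.finite_Iio N)
    intro i hi
    simp only [hS, Set.mem_setOf_eq] at hi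
    simp only [Set.mem_Iio]
    by_contra hc
    have := hN i (by omega)
    omega
  -- strictly below row a, values are strictly smaller
  have hlt : ∀ i, a < i → μ i < μ a := by
    intro i hi
    rcases Nat.eq_zero_or_pos (μ i) with h | h
    · omega
    · have h1 : μ (a + 1) < μ a := by
        have hle : μ (a + 1) ≤ μ a := hdec a (by omega)
        have h2 := hmax (a + 1) (by omega)
        simp only [Nat.add_sub_cancel] at h2
        have hpos : 0 < μ (a + 1) := lt_of_lt_of_le h (anti (a + 1) i (by omega) (by omega))
        omega
      exact lt_of_le_of_lt (anti (a + 1) i (by omega) (by omega)) h1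
  have hconj_top : conj μ (μ a) = a := by
    have hSa : S (μ a) = Set.Icc 1 a := by
      ext i
      simp only [hS, Set.mem_setOf_eq, Set.mem_Icc]
      constructor
      · rintro ⟨h1, h2⟩
        refine ⟨h1, ?_⟩
        by_contra hc
        have := hlt i (by omega)
        omega
      · rintro ⟨h1, h2⟩
        exact ⟨h1, anti i a h1 h2⟩
    rw [hconj, hSa, ← Finset.coe_Icc, Set.ncard_coe_finset, Nat.card_Icc]
    omega
  have hconj_one : a ≤ conj μ 1 := by
    rw [hconj]
    have hsub : (Set.Icc 1 a : Set ℕ) ⊆ S 1 := by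
      intro i hi
      simp only [Set.mem_Icc] at hi
      have := anti i a hi.1 hi.2
      exact ⟨hi.1, by omega⟩
    have : (Set.Icc 1 a : Set ℕ).ncard = a := by
      rw [← Finset.coe_Icc, Set.ncard_coe_finset, Nat.card_Icc]; omega
    rw [← this]
    exact Set.ncard_le_ncard hsub (hfin 1 le_rfl)
  -- the conjugate drops by at most one per step below μ a
  have hstep : ∀ j, 1 ≤ j → j < μ a → conj μ j ≤ conj μ (j + 1) + 1 := by
    intro j hj hja
    rw [hconj, hconj]
    have h1 : (S j).ncard ≤ (S j \ S (j + 1)).ncard + (S (j + 1)).ncard :=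
      Set.ncard_le_ncard_diff_add_ncard _ _ (hfin _ (by omega))
    have h2 : (S j \ S (j + 1)).ncard ≤ 1 := by
      rw [Set.ncard_le_one ((hfin j hj).diff)]
      intro x hx y hy
      simp only [hS, Set.mem_diff, Set.mem_setOf_eq, not_and, not_le] at hx hy
      have hxj : μ x = j := by omega
      have hyj : μ y = j := by omega
      have uniq : ∀ u v : ℕ, μ u = j → μ v = j → u < v → False := by
        intro u v hu hv huv
        have hua : a < u := by
          by_contra hc
          have h3 : 1 ≤ u := by
            rcases Nat.eq_zero_or_pos u with h | h
            · rw [h] at hu; omega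
            · omega
          have := anti u a h3 (by omega)
          omega
        have h4 : μ v ≤ μ (u + 1) := anti (u + 1) v (by omega) (by omega)
        have h5 : μ (u + 1) ≤ μ u := hdec u (by omega)
        have h6 := hmax (u + 1) (by omega)
        simp only [Nat.add_sub_cancel] at h6
        omega
      rcases lt_trichotomy x y with h | h | h
      · exact absurd (uniq x y hxj hyj h) (by simp)
      · exact h
      · exact absurd (uniq y x hyj hxj h) (by simp)
    omega
  -- hook in row a-1 is one more than in row a
  have hrow : ∀ j : ℕ, hook μ (a - 1) j = hook μ a j + 1 := by
    intro j
    simp only [hook, hrep1]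
    have : ((a - 1 : ℕ) : ℤ) = (a : ℤ) - 1 := by
      have := Nat.cast_sub (show 1 ≤ a by omega) (R := ℤ)
      simpa using this
    rw [this]; ring
  -- hooks in rows a-1 and a cover 1, …, hook(a, μ a - k) + 1
  have cover : ∀ k : ℕ, k < μ a → ∀ m : ℤ, 1 ≤ m → m ≤ hook μ a (μ a - k) + 1 →
      ∃ p q : ℕ, IsNode μ p q ∧ hook μ p q = m := by
    intro k
    induction k with
    | zero =>
      intro hk m hm1 hm2
      have h1 : hook μ a (μ a) = 1 := by
        simp only [hook, hconj_top]; ring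
      simp only [Nat.sub_zero, h1] at hm2
      rcases (show m = 1 ∨ m = 2 by omega) with h | h
      · exact ⟨a, μ a, ⟨by omega, by omega, le_rfl⟩, by rw [h1, h]⟩
      · exact ⟨a - 1, μ a, ⟨by omega, by omega, by rw [hrep1]⟩,
          by rw [hrow, h1]; omega⟩
    | succ k ih =>
      intro hk m hm1 hm2
      set j := μ a - (k + 1) with hj
      have hj1 : 1 ≤ j := by omega
      have hjlt : j < μ a := by omega
      have e1 : μ a - k = j + 1 := by omega
      by_cases h : m = hook μ a j
      · exact ⟨a, j, ⟨by omega, hj1, by omega⟩, h.symm⟩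
      by_cases h' : m = hook μ a j + 1
      · exact ⟨a - 1, j, ⟨by omega, hj1, by rw [hrep1]; omega⟩, by rw [hrow]; omega⟩
      · apply ih (by omega) m hm1
        rw [e1]
        have hcs := hstep j hj1 hjlt
        have hkey : hook μ a j ≤ hook μ a (j + 1) + 2 := by
          simp only [hook]
          push_cast
          omega
        omega
  by_contra hcon
  have hea : (e : ℤ) ≤ (μ a : ℤ) + 1 := by
    have : e - 1 ≤ μ a := by omega
    omega
  have h1a : (μ a : ℤ) + 1 ≤ hook μ a 1 + 1 := by
    simp only [hook]
    have := hconj_one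
    push_cast
    omega
  have e2 : μ a - (μ a - 1) = 1 := by omega
  obtain ⟨p, q, hnode, hhook⟩ := cover (μ a - 1) (by omega) (e : ℤ)
    (by omega) (by rw [e2]; omega)
  exact hcore p q hnode (hhook ▸ dvd_refl _)
end

section
/- Let λ be an unbroken doubly-singular partition that is a 2p-core for a prime p. Then λ_1 ≤ 4p - 6 and λ'_1 ≤ 4p - 6. -/
namespace AuxPf


theorem antitone_of {μ : ℕ → ℕ} (hμ : IsPartition μ) :
    ∀ i j, 1 ≤ i → i ≤ j → μ j ≤ μ i := by
  obtain ⟨-, hmono, -⟩ := hμ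
  intro i j hi hij
  induction j with
  | zero => omega
  | succ n ih =>
    rcases Nat.lt_or_ge i (n+1) with h | h
    · have hn : 1 ≤ n := by omega
      exact le_trans (hmono n hn) (ih (by omega))
    · have : i = n + 1 := by omega
      subst this; exact le_rfl

theorem conj_spec {μ : ℕ → ℕ} (hμ : IsPartition μ) (j : ℕ) (hj : 1 ≤ j) :
    ∀ k, 1 ≤ k → (k ≤ conj μ j ↔ j ≤ μ k) := by
  obtain ⟨N, hN⟩ := hμ.2.2
  have hex : ∃ n, μ (n + 1) < j := ⟨N, by have := hN (N+1) (by omega); omega⟩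
  set m := Nat.find hex with hm
  have hkey : ∀ k, 1 ≤ k → (k ≤ m ↔ j ≤ μ k) := by
    intro k hk
    constructor
    · intro hkm
      have := Nat.find_min hex (show k - 1 < m by omega)
      have hkk : k - 1 + 1 = k := by omega
      rw [hkk] at this; omega
    · intro hjk
      by_contra h
      have hfind : μ (m + 1) < j := by rw [hm]; exact Nat.find_spec hex
      have := antitone_of (⟨hμ.1, hμ.2.1, N, hN⟩) (m+1) k (by omega) (by omega)
      omega
  have hset : {i : ℕ | 1 ≤ i ∧ j ≤ μ i} = Set.Icc 1 m := by
    ext i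
    simp only [Set.mem_setOf_eq, Set.mem_Icc]
    constructor
    · rintro ⟨h1, h2⟩; exact ⟨h1, (hkey i h1).2 h2⟩
    · rintro ⟨h1, h2⟩; exact ⟨h1, (hkey i h1).1 h2⟩
  have hconj : conj μ j = m := by
    have : conj μ j = Nat.card ↥{i : ℕ | 1 ≤ i ∧ j ≤ μ i} := rfl
    rw [this, hset, ← Finset.coe_Icc, Nat.card_coe_set_eq, Set.ncard_coe_finset,
      Nat.card_Icc]
    omega
  intro k hk
  rw [hconj]
  exact hkey k hk

theorem conj_anti {μ : ℕ → ℕ} (hμ : IsPartition μ) :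
    ∀ j j', 1 ≤ j → j ≤ j' → conj μ j' ≤ conj μ j := by
  intro j j' hj hjj
  by_contra h
  push_neg at h
  have h1 : 1 ≤ conj μ j' := by omega
  have h2 := (conj_spec hμ j' (by omega) (conj μ j') h1).1 le_rfl
  have h3 := (conj_spec hμ j hj (conj μ j') h1).2 (by omega)
  omega



/-- The set of first-column hook lengths (beta-numbers). -/
noncomputable def bset (μ : ℕ → ℕ) : Finset ℕ :=
  (Finset.Icc 1 (conj μ 1)).image (fun k => μ k + (conj μ 1 - k))

section BSet

variable {μ : ℕ → ℕ} (hμ : IsPartition μ)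

theorem mem_bset {b : ℕ} :
    b ∈ bset μ ↔ ∃ k, 1 ≤ k ∧ k ≤ conj μ 1 ∧ μ k + (conj μ 1 - k) = b := by
  simp only [bset, Finset.mem_image, Finset.mem_Icc]
  constructor
  · rintro ⟨k, ⟨h1, h2⟩, h3⟩; exact ⟨k, h1, h2, h3⟩
  · rintro ⟨k, h1, h2, h3⟩; exact ⟨k, ⟨h1, h2⟩, h3⟩

include hμ

theorem mu_pos_of_le (k : ℕ) (h1 : 1 ≤ k) (h2 : k ≤ conj μ 1) : 1 ≤ μ k :=
  (conj_spec hμ 1 le_rfl k h1).1 h2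

theorem beta_lt (k k' : ℕ) (h1 : 1 ≤ k) (h2 : k < k') (h3 : k' ≤ conj μ 1) :
    μ k' + (conj μ 1 - k') < μ k + (conj μ 1 - k) := by
  have := antitone_of hμ k k' h1 (by omega)
  have := mu_pos_of_le hμ k' (by omega) h3
  omega

theorem beta_le (k k' : ℕ) (h1 : 1 ≤ k) (h2 : k ≤ k') (h3 : k' ≤ conj μ 1) :
    μ k' + (conj μ 1 - k') ≤ μ k + (conj μ 1 - k) := by
  rcases Nat.eq_or_lt_of_le h2 with h | h
  · subst h; exact le_rfl
  · exact le_of_lt (beta_lt hμ k k' h1 h h3)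

theorem beta_lt_rev (k k' : ℕ) (h1 : 1 ≤ k) (h1' : 1 ≤ k') (h3 : k ≤ conj μ 1)
    (h3' : k' ≤ conj μ 1)
    (hv : μ k' + (conj μ 1 - k') < μ k + (conj μ 1 - k)) : k < k' := by
  by_contra h
  have := beta_le hμ k' k h1' (by omega) h3
  omega

theorem bset_pos {b : ℕ} (hb : b ∈ bset μ) : 1 ≤ b := by
  obtain ⟨k, h1, h2, h3⟩ := mem_bset.1 hb
  have := mu_pos_of_le hμ k h1 h2
  omega

theorem card_bset : (bset μ).card = conj μ 1 := by
  rw [bset, Finset.card_image_of_injOn, Nat.card_Icc]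
  · omega
  · intro k hk k' hk' hkk
    simp only [Finset.coe_Icc, Set.mem_Icc] at hk hk'
    simp only [] at hkk
    by_contra hne
    rcases Nat.lt_or_ge k k' with h | h
    · have := beta_lt hμ k k' hk.1 h hk'.2; omega
    · have := beta_lt hμ k' k hk'.1 (by omega) hk.2; omega

theorem bset_le_max {b : ℕ} (hb : b ∈ bset μ) : b ≤ μ 1 + (conj μ 1 - 1) := by
  obtain ⟨k, h1, h2, h3⟩ := mem_bset.1 hb
  have := beta_le hμ 1 k le_rfl h1 h2
  omega

/-- Master lemma: every non-bead below a bead is realized as a hook in the bead's row. -/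
theorem exists_hook {b : ℕ} (hb : b ∈ bset μ) {c : ℕ} (hc : c < b) (hcB : c ∉ bset μ) :
    ∃ i j, IsNode μ i j ∧ hook μ i j = (b : ℤ) - (c : ℤ) := by
  classical
  set r := conj μ 1 with hrdef
  obtain ⟨k, hk1, hkr, hkb⟩ := mem_bset.1 hb
  have hμk : 1 ≤ μ k := mu_pos_of_le hμ k hk1 hkr
  have hcle : ∀ j, 1 ≤ j → conj μ j ≤ r := fun j hj => conj_anti hμ 1 j le_rfl hj
  have hdual : ∀ j k', 1 ≤ j → 1 ≤ k' → (k' ≤ conj μ j ↔ j ≤ μ k') :=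
    fun j k' hj hk' => conj_spec hμ j hj k' hk'
  set f : ℕ → ℕ := fun j => (r - conj μ j) + (j - 1) with hfdef
  -- f is strictly monotone on [1, ∞)
  have hfmono : ∀ j j', 1 ≤ j → j < j' → f j < f j' := by
    intro j j' hj hjj
    have h1 := conj_anti hμ j j' hj (by omega)
    have h2 := hcle j hj
    have h3 := hcle j' (by omega)
    simp only [hfdef]
    omega
  -- values of f lie below b and are non-beads
  have hflt : ∀ j, 1 ≤ j → j ≤ μ k → f j < b := by
    intro j hj hjm
    have hkc : k ≤ conj μ j := (hdual j k hj hk1).2 hjm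
    have := hcle j hj
    simp only [hfdef]
    omega
  have hfnb : ∀ j, 1 ≤ j → j ≤ μ k → f j ∉ bset μ := by
    intro j hj hjm hmem
    obtain ⟨k', hk'1, hk'r, hk'b⟩ := mem_bset.1 hmem
    have hcj := hcle j hj
    by_cases hle : k' ≤ conj μ j
    · have : j ≤ μ k' := (hdual j k' hj hk'1).1 hle
      simp only [hfdef] at hk'b
      omega
    · have : ¬ j ≤ μ k' := fun h => hle ((hdual j k' hj hk'1).2 h)
      simp only [hfdef] at hk'b
      omega
  -- the non-bead set below b
  set Cb : Finset ℕ := (Finset.range b) \ bset μ with hCb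
  have hcardB : ((bset μ) ∩ Finset.range b).card = r - k := by
    have himg : (bset μ) ∩ Finset.range b
        = (Finset.Icc (k+1) r).image (fun k' => μ k' + (r - k')) := by
      ext b'
      simp only [Finset.mem_inter, Finset.mem_range, Finset.mem_image, Finset.mem_Icc]
      constructor
      · rintro ⟨hbm, hblt⟩
        obtain ⟨k', h1, h2, h3⟩ := mem_bset.1 hbm
        refine ⟨k', ⟨?_, h2⟩, h3⟩
        have : k < k' := by
          apply beta_lt_rev hμ k k' hk1 h1 hkr h2
          omega
        omega
      · rintro ⟨k', ⟨h1, h2⟩, h3⟩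
        constructor
        · exact mem_bset.2 ⟨k', by omega, h2, h3⟩
        · have := beta_lt hμ k k' hk1 (by omega) h2
          omega
    rw [himg, Finset.card_image_of_injOn, Nat.card_Icc]
    · omega
    · intro a ha a' ha' haa
      simp only [Finset.coe_Icc, Set.mem_Icc] at ha ha'
      simp only [] at haa
      by_contra hne
      rcases Nat.lt_or_ge a a' with h | h
      · have := beta_lt hμ a a' (by omega) h ha'.2; omega
      · have := beta_lt hμ a' a (by omega) (by omega) ha.2; omega
  have hcardCb : Cb.card = μ k := by
    have hsplit := Finset.card_sdiff_add_card_inter (Finset.range b) (bset μ)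
    rw [Finset.inter_comm] at hsplit
    rw [hcardB, Finset.card_range] at hsplit
    have hrk : r - k ≤ b := by omega
    rw [hCb]
    omega
  set F : Finset ℕ := (Finset.Icc 1 (μ k)).image f with hF
  have hFsub : F ⊆ Cb := by
    intro x hx
    obtain ⟨j, hj, hjx⟩ := Finset.mem_image.1 hx
    simp only [Finset.mem_Icc] at hj
    rw [hCb, Finset.mem_sdiff, Finset.mem_range]
    subst hjx
    exact ⟨hflt j hj.1 hj.2, hfnb j hj.1 hj.2⟩
  have hFcard : F.card = μ k := by
    rw [hF, Finset.card_image_of_injOn, Nat.card_Icc]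
    · omega
    · intro a ha a' ha' haa
      simp only [Finset.coe_Icc, Set.mem_Icc] at ha ha'
      by_contra hne
      rcases Nat.lt_or_ge a a' with h | h
      · have := hfmono a a' ha.1 h; omega
      · have := hfmono a' a ha'.1 (by omega); omega
  have hFeq : F = Cb := Finset.eq_of_subset_of_card_le hFsub (by omega)
  have hcCb : c ∈ Cb := by
    rw [hCb, Finset.mem_sdiff, Finset.mem_range]
    exact ⟨hc, hcB⟩
  rw [← hFeq] at hcCb
  obtain ⟨j, hj, hjc⟩ := Finset.mem_image.1 hcCb
  simp only [Finset.mem_Icc] at hj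
  refine ⟨k, j, ⟨hk1, hj.1, hj.2⟩, ?_⟩
  -- hook μ k j = b - c
  have hkcj : k ≤ conj μ j := (hdual j k hj.1 hk1).2 hj.2
  have hcjr := hcle j hj.1
  simp only [hfdef] at hjc
  have hbz : (b : ℤ) = (μ k : ℤ) + (r : ℤ) - (k : ℤ) := by
    have h0 : r = conj μ 1 := hrdef
    omega
  have hcz : (c : ℤ) = (r : ℤ) - (conj μ j : ℤ) + (j : ℤ) - 1 := by
    have h1 : 1 ≤ j := hj.1
    omega
  simp only [hook]
  rw [hbz, hcz]
  ring

end BSet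



section Trans
variable {μ : ℕ → ℕ} (hμ : IsPartition μ)
include hμ

theorem star_of_core {e : ℕ} (hcore : IsECore e μ) :
    ∀ b ∈ bset μ, ∀ c, c < b → c ∉ bset μ → ¬ e ∣ (b - c) := by
  intro b hb c hc hcB hdvd
  obtain ⟨i, j, hnode, hhook⟩ := exists_hook hμ hb hc hcB
  apply hcore i j hnode
  rw [hhook]
  obtain ⟨m, hm⟩ := hdvd
  refine ⟨(m : ℤ), ?_⟩
  omega

theorem rep_beads (h1 : TwoSingular μ) :
    ∃ x, 1 ≤ x ∧ x ∈ bset μ ∧ x + 1 ∈ bset μ := by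
  obtain ⟨i, hi, heq, hpos⟩ := h1
  have hir : i + 1 ≤ conj μ 1 := (conj_spec hμ 1 le_rfl (i+1) (by omega)).2 (by omega)
  refine ⟨μ (i+1) + (conj μ 1 - (i+1)), by omega, ?_, ?_⟩
  · exact mem_bset.2 ⟨i+1, by omega, hir, rfl⟩
  · refine mem_bset.2 ⟨i, hi, by omega, ?_⟩
    omega

theorem gap_beads (h2 : TwoSingular (conj μ)) :
    ∃ z w, z ∉ bset μ ∧ z + 1 ∉ bset μ ∧ w ∈ bset μ ∧ z + 1 < w := by
  obtain ⟨i, hi, heq, hpos⟩ := h2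
  set r := conj μ 1 with hr
  set l := conj μ i with hl
  have hlr : l ≤ r := conj_anti hμ 1 i le_rfl hi
  have hl1 : 1 ≤ l := hpos
  have hml : i + 1 ≤ μ l := by
    have := (conj_spec hμ (i+1) (by omega) l hl1).1 (by omega)
    exact this
  rcases Nat.eq_or_lt_of_le hlr with hcase | hcase
  · -- l = r : bottom gap
    have hmur : 2 ≤ μ r := by rw [← hcase]; omega
    refine ⟨μ r - 2, μ r + (r - r), ?_, ?_, mem_bset.2 ⟨r, by omega, le_rfl, rfl⟩, by omega⟩
    · intro hmem
      obtain ⟨k, hk1, hkr, hkb⟩ := mem_bset.1 hmem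
      have := beta_le hμ k r hk1 hkr le_rfl
      omega
    · intro hmem
      obtain ⟨k, hk1, hkr, hkb⟩ := mem_bset.1 hmem
      have := beta_le hμ k r hk1 hkr le_rfl
      omega
  · -- l < r : internal gap
    have hmu1 : ¬ i ≤ μ (l + 1) := by
      intro h
      have := (conj_spec hμ i hi (l+1) (by omega)).2 h
      omega
    have hlow : μ (l+1) + (r - (l+1)) + 2 ≤ μ l + (r - l) := by
      have : i + 1 + (r - l) ≤ μ l + (r - l) := by omega
      omega
    refine ⟨μ (l+1) + (r - (l+1)) + 1, μ l + (r - l), ?_, ?_,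
      mem_bset.2 ⟨l, hl1, by omega, rfl⟩, by omega⟩
    · intro hmem
      obtain ⟨k, hk1, hkr, hkb⟩ := mem_bset.1 hmem
      rcases le_or_gt k l with h | h
      · have := beta_le hμ k l hk1 h (by omega)
        omega
      · have := beta_le hμ (l+1) k (by omega) h hkr
        omega
    · intro hmem
      obtain ⟨k, hk1, hkr, hkb⟩ := mem_bset.1 hmem
      rcases le_or_gt k l with h | h
      · have := beta_le hμ k l hk1 h (by omega)
        omega
      · have := beta_le hμ (l+1) k (by omega) h hkr
        omega

theorem broken_of_beads {x z w : ℕ} (hx : x ∈ bset μ) (hx1 : x + 1 ∈ bset μ)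
    (hz : z ∉ bset μ) (hz1 : z + 1 ∉ bset μ) (hw : w ∈ bset μ) (hzw : z + 1 < w)
    (hxz : x + 1 < z) : Broken μ := by
  classical
  set r := conj μ 1 with hr
  obtain ⟨k1, hk11, hk1r, hk1b⟩ := mem_bset.1 hx1
  obtain ⟨k2, hk21, hk2r, hk2b⟩ := mem_bset.1 hx
  have hk12 : k1 < k2 := beta_lt_rev hμ k1 k2 hk11 hk21 hk1r hk2r (by omega)
  -- β (k1+1) = x
  have hbk1s : μ (k1+1) + (r - (k1+1)) = x := by
    have h1 : μ (k1+1) + (r - (k1+1)) < x + 1 := by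
      have := beta_lt hμ k1 (k1+1) hk11 (by omega) (by omega)
      omega
    have h2 : x ≤ μ (k1+1) + (r - (k1+1)) := by
      have := beta_le hμ (k1+1) k2 (by omega) (by omega) hk2r
      omega
    omega
  -- T : indices of beads above z+1
  set T : Finset ℕ := (Finset.Icc 1 r).filter (fun k => z + 1 < μ k + (r - k)) with hT
  obtain ⟨kw, hkw1, hkwr, hkwb⟩ := mem_bset.1 hw
  have hTne : T.Nonempty := ⟨kw, by
    rw [hT, Finset.mem_filter, Finset.mem_Icc]
    exact ⟨⟨hkw1, hkwr⟩, by omega⟩⟩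
  set a := T.max' hTne with ha
  have haT : a ∈ T := Finset.max'_mem T hTne
  have haspec : 1 ≤ a ∧ a ≤ r ∧ z + 1 < μ a + (r - a) := by
    have := haT
    rw [hT, Finset.mem_filter, Finset.mem_Icc] at this
    exact ⟨this.1.1, this.1.2, this.2⟩
  have hak1 : a < k1 := by
    apply beta_lt_rev hμ a k1 haspec.1 hk11 haspec.2.1 hk1r
    omega
  have ha1nT : a + 1 ∉ T := by
    intro hmem
    have := Finset.le_max' T (a+1) hmem
    omega
  have hba1 : μ (a+1) + (r - (a+1)) + 1 ≤ z := by
    have hle : μ (a+1) + (r - (a+1)) ≤ z + 1 := by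
      by_contra hcon
      exact ha1nT (by
        rw [hT, Finset.mem_filter, Finset.mem_Icc]
        exact ⟨⟨by omega, by omega⟩, by omega⟩)
    have hne1 : μ (a+1) + (r - (a+1)) ≠ z + 1 := by
      intro h
      exact hz1 (mem_bset.2 ⟨a+1, by omega, by omega, h⟩)
    have hne2 : μ (a+1) + (r - (a+1)) ≠ z := by
      intro h
      exact hz (mem_bset.2 ⟨a+1, by omega, by omega, h⟩)
    omega
  -- Broken with c := a+1, d := k1+1
  refine ⟨a + 1, k1 + 1, by omega, by omega, ?_, ?_, ?_⟩
  · -- μ (a+1) + 1 < μ a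
    have h1 : z + 2 ≤ μ a + (r - a) := haspec.2.2
    simp only [Nat.add_sub_cancel]
    omega
  · -- μ k1 = μ (k1+1)
    simp only [Nat.add_sub_cancel]
    omega
  · -- 0 < μ (k1+1)
    have := mu_pos_of_le hμ (k1+1) (by omega) (by omega)
    omega

end Trans


theorem key_combinatorics (e : ℕ) (he : 4 ≤ e) (B : Finset ℕ)
    (hpos : ∀ b ∈ B, 1 ≤ b)
    (hstar : ∀ b ∈ B, ∀ c, c < b → c ∉ B → ¬ e ∣ (b - c))
    (hrep : ∃ x, x ∈ B ∧ x + 1 ∈ B)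
    (hgap : ∃ z w, z ∉ B ∧ z + 1 ∉ B ∧ w ∈ B ∧ z + 1 < w)
    (hunb : ∀ x z w, x ∈ B → x + 1 ∈ B → z ∉ B → z + 1 ∉ B → w ∈ B → z + 1 < w →
      z ≤ x + 1) :
    B.card ≤ e - 2 ∧ ∀ b ∈ B, b + 1 ≤ (e - 2) + B.card := by
  classical
  have h0nB : (0 : ℕ) ∉ B := fun h => by have := hpos 0 h; omega
  have no_mult : ∀ m ∈ B, ¬ e ∣ m := by
    intro m hm hd
    have h1 : 1 ≤ m := hpos m hm
    have := hstar m hm 0 (by omega) h0nB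
    simp only [Nat.sub_zero] at this
    exact this hd
  have down : ∀ b ∈ B, e < b → b - e ∈ B := by
    intro b hb hlt
    by_contra h
    apply hstar b hb (b - e) (by omega) h
    have : b - (b - e) = e := by omega
    rw [this]
  have up : ∀ z, z ∉ B → z + e ∉ B := by
    intro z hz hmem
    rcases Nat.eq_zero_or_pos z with h | h
    · subst h
      exact no_mult (0 + e) hmem (by simpa using dvd_refl e)
    · have := down (z + e) hmem (by omega)
      rw [Nat.add_sub_cancel] at this
      exact hz this
  -- the minimal repeat s
  set s := Nat.find hrep with hs
  have hsB : s ∈ B ∧ s + 1 ∈ B := Nat.find_spec hrep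
  have smin : ∀ y, y < s → ¬ (y ∈ B ∧ y + 1 ∈ B) := fun y hy => Nat.find_min hrep hy
  have hs1 : 1 ≤ s := hpos s hsB.1
  have hse : s + 2 ≤ e := by
    have hslt : s < e := by
      by_contra h
      push_neg at h
      rcases Nat.eq_or_lt_of_le h with h' | h'
      · exact no_mult s hsB.1 (by rw [← h'])
      · have d1 : s - e ∈ B := down s hsB.1 h'
        have d2 : s - e + 1 ∈ B := by
          have := down (s + 1) hsB.2 (by omega)
          have heq : s + 1 - e = s - e + 1 := by omega
          rwa [heq] at this
        exact smin (s - e) (by omega) ⟨d1, d2⟩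
    have : s + 1 ≠ e := by
      intro h
      exact no_mult (s + 1) hsB.2 (by rw [h])
    omega
  obtain ⟨z₀, w₀, hz0, hz01, hw0, hz0w⟩ := hgap
  -- internal double holes are below s
  have dh1 : ∀ z w, z ∉ B → z + 1 ∉ B → w ∈ B → z + 1 < w → z + 2 ≤ s := by
    intro z w hz hz1 hw hlt
    have h1 : z ≤ s + 1 := hunb s z w hsB.1 hsB.2 hz hz1 hw hlt
    have h2 : z ≠ s + 1 := fun h => hz (h ▸ hsB.2)
    have h3 : z ≠ s := fun h => hz (h ▸ hsB.1)
    have h4 : z + 1 ≠ s := fun h => hz1 (h ▸ hsB.1)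
    omega
  -- all beads are below z + e for every double hole (z, z+1)
  have dh2 : ∀ z w, z ∉ B → z + 1 ∉ B → w ∈ B → w + 1 ≤ z + e := by
    intro z w hz hz1 hw
    have hze : z + e ∉ B := up z hz
    have hze1 : z + e + 1 ∉ B := by
      have := up (z + 1) hz1
      have heq : z + 1 + e = z + e + 1 := by omega
      rwa [heq] at this
    by_contra h
    push_neg at h
    have hw1 : z + e + 2 ≤ w := by
      have : w ≠ z + e := fun hh => hze (hh ▸ hw)
      have : w ≠ z + e + 1 := fun hh => hze1 (hh ▸ hw)
      omega
    have := dh1 (z + e) w hze hze1 hw (by omega)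
    omega
  have hz0s : z₀ + 2 ≤ s := dh1 z₀ w₀ hz0 hz01 hw0 hz0w
  by_cases hcase : ∀ b ∈ B, b + 1 ≤ e
  -- Case A : all beads below e
  · constructor
    · have hsub : B ⊆ (Finset.Icc 1 (e - 1)).erase (z₀ + 1) := by
        intro b hb
        rw [Finset.mem_erase, Finset.mem_Icc]
        refine ⟨fun h => hz01 (h ▸ hb), hpos b hb, ?_⟩
        have := hcase b hb
        omega
      have hle := Finset.card_le_card hsub
      rw [Finset.card_erase_of_mem (by rw [Finset.mem_Icc]; omega), Nat.card_Icc] at hle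
      omega
    · intro b hb
      have hb1 := hcase b hb
      have h2 : 2 ≤ B.card := by
        have hsub : ({s, s + 1} : Finset ℕ) ⊆ B := by
          intro y hy
          simp only [Finset.mem_insert, Finset.mem_singleton] at hy
          rcases hy with h | h
          · exact h ▸ hsB.1
          · exact h ▸ hsB.2
        have := Finset.card_le_card hsub
        rwa [Finset.card_pair (by omega)] at this
      omega
  -- Case B : some bead ≥ e + 1
  · push_neg at hcase
    obtain ⟨b₀, hb₀B, hb₀⟩ := hcase
    have hb₀e : e + 1 ≤ b₀ := by
      have : b₀ ≠ e := fun h => no_mult b₀ hb₀B (h ▸ dvd_refl e)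
      omega
    have hBne : B.Nonempty := ⟨b₀, hb₀B⟩
    set M := B.max' hBne with hM
    have hMB : M ∈ B := B.max'_mem hBne
    have hMb : ∀ b ∈ B, b ≤ M := fun b hb => B.le_max' b hb
    have hMe : e + 1 ≤ M := le_trans hb₀e (hMb b₀ hb₀B)
    set t := M - e with ht
    have ht1 : 1 ≤ t := by omega
    have hMet : M = e + t := by omega
    have hz0t : t + 1 ≤ z₀ := by
      have := dh2 z₀ M hz0 hz01 hMB
      omega
    have hts : t + 3 ≤ s := by omega
    have h1B : 1 ∈ B := by
      by_contra h1B
      have := dh2 0 M h0nB (by simpa using h1B) hMB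
      omega
    -- alternation on [1, t+1]
    have alt : ∀ j, 2 * j + 1 ≤ t + 1 → (2 * j + 1 ∈ B ∧ 2 * j + 2 ∉ B) := by
      intro j
      induction j with
      | zero =>
        intro _
        refine ⟨by simpa using h1B, ?_⟩
        intro h2B
        exact smin 1 (by omega) ⟨by simpa using h1B, by simpa using h2B⟩
      | succ j ih =>
        intro hle
        obtain ⟨hodd, heven⟩ := ih (by omega)
        have hb : 2 * (j + 1) + 1 ∈ B := by
          by_contra hb
          have heq : 2 * j + 2 + 1 = 2 * (j + 1) + 1 := by ring
          have := dh2 (2 * j + 2) M heven (by rw [heq]; exact hb) hMB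
          omega
        refine ⟨hb, ?_⟩
        intro h4
        have heq : 2 * (j + 1) + 1 + 1 = 2 * (j + 1) + 2 := by ring
        exact smin (2 * (j + 1) + 1) (by omega) ⟨hb, by rw [heq]; exact h4⟩
    have odd_bead : ∀ a, a ≤ t + 1 → a % 2 = 1 → a ∈ B := by
      intro a h1 h2
      have := (alt (a / 2) (by omega)).1
      have heq : 2 * (a / 2) + 1 = a := by omega
      rwa [heq] at this
    have even_hole : ∀ a, 1 ≤ a → a ≤ t + 1 → a % 2 = 0 → a ∉ B := by
      intro a h1 h2 h3
      have := (alt ((a - 2) / 2) (by omega)).2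
      have heq : 2 * ((a - 2) / 2) + 2 = a := by omega
      rwa [heq] at this
    constructor
    -- upper bound on card
    · set E1 : Finset ℕ := (Finset.Icc 1 ((t + 1) / 2)).image (fun j => 2 * j) with hE1
      set E2 : Finset ℕ := (Finset.Icc 1 (t / 2)).image (fun j => 2 * j + e) with hE2
      set H : Finset ℕ := (E1 ∪ E2) ∪ {e, z₀ + 1} with hH
      have hE1mem : ∀ a ∈ E1, 2 ≤ a ∧ a ≤ t + 1 ∧ a % 2 = 0 := by
        intro a ha
        obtain ⟨j, hj, rfl⟩ := Finset.mem_image.1 ha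
        rw [Finset.mem_Icc] at hj
        omega
      have hE2mem : ∀ a ∈ E2, e + 2 ≤ a ∧ a ≤ e + t ∧ (a - e) % 2 = 0 ∧ a - e ≤ t := by
        intro a ha
        obtain ⟨j, hj, rfl⟩ := Finset.mem_image.1 ha
        rw [Finset.mem_Icc] at hj
        omega
      have hHnotB : ∀ a ∈ H, a ∉ B := by
        intro a ha
        rw [hH, Finset.mem_union, Finset.mem_union] at ha
        rcases ha with (ha | ha) | ha
        · obtain ⟨h1, h2, h3⟩ := hE1mem a ha
          exact even_hole a (by omega) h2 h3
        · obtain ⟨h1, h2, h3, h4⟩ := hE2mem a ha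
          have : a - e ∉ B := even_hole (a - e) (by omega) (by omega) h3
          have := up (a - e) this
          have heq : a - e + e = a := by omega
          rwa [heq] at this
        · simp only [Finset.mem_insert, Finset.mem_singleton] at ha
          rcases ha with rfl | rfl
          · exact fun h => no_mult a h (dvd_refl a)
          · exact hz01
      have hHsub : H ⊆ Finset.Icc 1 M := by
        intro a ha
        rw [Finset.mem_Icc]
        rw [hH, Finset.mem_union, Finset.mem_union] at ha
        rcases ha with (ha | ha) | ha
        · have := hE1mem a ha; omega
        · have := hE2mem a ha; omega
        · simp only [Finset.mem_insert, Finset.mem_singleton] at ha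
          rcases ha with rfl | rfl
          · omega
          · omega
      have hcardE1 : E1.card = (t + 1) / 2 := by
        rw [hE1, Finset.card_image_of_injOn (fun a _ b _ h => by omega), Nat.card_Icc]
        omega
      have hcardE2 : E2.card = t / 2 := by
        rw [hE2, Finset.card_image_of_injOn (fun a _ b _ h => by omega), Nat.card_Icc]
        omega
      have hcardH : H.card = (t + 1) / 2 + t / 2 + 2 := by
        rw [hH, Finset.card_union_of_disjoint, Finset.card_union_of_disjoint, hcardE1,
          hcardE2, Finset.card_pair (by omega)]
        · rw [Finset.disjoint_left]
          intro a ha1 ha2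
          have := hE1mem a ha1
          have := hE2mem a ha2
          omega
        · rw [Finset.disjoint_left]
          intro a ha1 ha2
          simp only [Finset.mem_insert, Finset.mem_singleton] at ha2
          rw [Finset.mem_union] at ha1
          rcases ha1 with ha | ha
          · have := hE1mem a ha
            omega
          · have := hE2mem a ha
            omega
      have hBsub : B ⊆ Finset.Icc 1 M \ H := by
        intro b hb
        rw [Finset.mem_sdiff, Finset.mem_Icc]
        exact ⟨⟨hpos b hb, hMb b hb⟩, fun h => hHnotB b h hb⟩
      have hle := Finset.card_le_card hBsub
      rw [Finset.card_sdiff_of_subset hHsub, Nat.card_Icc, hcardH] at hle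
      omega
    -- lower bound on card
    · have hcard : t + 3 ≤ B.card := by
        set g : ℕ → ℕ := fun j => if M - (2 * j + 1) ∈ B then M - (2 * j + 1) else M - 2 * j
          with hg
        have hgmem : ∀ j, j < (t + 1) / 2 → g j ∈ B := by
          intro j hj
          by_cases hcb : M - (2 * j + 1) ∈ B
          · simpa [hg, hcb] using hcb
          · have hMj : M - 2 * j ∈ B := by
              rcases Nat.eq_zero_or_pos j with rfl | hjpos
              · simpa using hMB
              · by_contra h2
                have hz' : M - (2 * j + 1) + 1 = M - 2 * j := by omega
                have := dh1 (M - (2 * j + 1)) M hcb (by rw [hz']; exact h2) hMB (by omega)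
                omega
            simpa [hg, hcb] using hMj
        have hgrange : ∀ j, j < (t + 1) / 2 → M - (2 * j + 1) ≤ g j ∧ g j ≤ M - 2 * j := by
          intro j hj
          by_cases hcb : M - (2 * j + 1) ∈ B <;> simp [hg, hcb] <;> omega
        set S1 : Finset ℕ := (Finset.range ((t + 2) / 2)).image (fun j => 2 * j + 1) with hS1
        set S3 : Finset ℕ := (Finset.range ((t + 1) / 2)).image g with hS3
        set S : Finset ℕ := (S1 ∪ {s, s + 1}) ∪ S3 with hS
        have hS1mem : ∀ a ∈ S1, 1 ≤ a ∧ a ≤ t + 1 ∧ a % 2 = 1 := by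
          intro a ha
          obtain ⟨j, hj, rfl⟩ := Finset.mem_image.1 ha
          rw [Finset.mem_range] at hj
          omega
        have hS3mem : ∀ a ∈ S3, e ≤ a := by
          intro a ha
          obtain ⟨j, hj, rfl⟩ := Finset.mem_image.1 ha
          rw [Finset.mem_range] at hj
          have := hgrange j hj
          omega
        have hSsub : S ⊆ B := by
          intro a ha
          rw [hS, Finset.mem_union, Finset.mem_union] at ha
          rcases ha with (ha | ha) | ha
          · obtain ⟨h1, h2, h3⟩ := hS1mem a ha
            exact odd_bead a h2 h3
          · simp only [Finset.mem_insert, Finset.mem_singleton] at ha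
            rcases ha with rfl | rfl
            · exact hsB.1
            · exact hsB.2
          · obtain ⟨j, hj, rfl⟩ := Finset.mem_image.1 ha
            rw [Finset.mem_range] at hj
            exact hgmem j hj
        have hcardS1 : S1.card = (t + 2) / 2 := by
          rw [hS1, Finset.card_image_of_injOn (fun a _ b _ h => by omega),
            Finset.card_range]
        have hcardS3 : S3.card = (t + 1) / 2 := by
          rw [hS3, Finset.card_image_of_injOn ?_, Finset.card_range]
          intro a ha b hb hab
          simp only [Finset.coe_range, Set.mem_Iio] at ha hb
          by_contra hne
          rcases Nat.lt_or_ge a b with h | h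
          · have h1 := hgrange a ha
            have h2 := hgrange b hb
            omega
          · have h1 := hgrange a ha
            have h2 := hgrange b hb
            omega
        have hcardS : S.card = (t + 2) / 2 + 2 + (t + 1) / 2 := by
          rw [hS, Finset.card_union_of_disjoint, Finset.card_union_of_disjoint, hcardS1,
            Finset.card_pair (by omega), hcardS3]
          · rw [Finset.disjoint_left]
            intro a ha1 ha2
            simp only [Finset.mem_insert, Finset.mem_singleton] at ha2
            have := hS1mem a ha1
            omega
          · rw [Finset.disjoint_left]
            intro a ha1 ha2
            have h3 := hS3mem a ha2
            rw [Finset.mem_union] at ha1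
            rcases ha1 with ha | ha
            · have := hS1mem a ha
              omega
            · simp only [Finset.mem_insert, Finset.mem_singleton] at ha
              omega
        have := Finset.card_le_card hSsub
        omega
      intro b hb
      have := hMb b hb
      omega


end AuxPf

/-- An unbroken doubly-singular `2p`-core satisfies `μ_1 ≤ 4p - 6` and `μ'_1 ≤ 4p - 6`. -/
theorem bound_of_unbroken_doublySingular_core (μ : ℕ → ℕ) (p : ℕ)
    (hμ : IsPartition μ) (hp : p.Prime) (hub : ¬ Broken μ)
    (h1 : TwoSingular μ) (h2 : TwoSingular (conj μ))
    (hc : IsECore (2 * p) μ) :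
    μ 1 ≤ 4 * p - 6 ∧ conj μ 1 ≤ 4 * p - 6 := by
  classical
  have hp2 : 2 ≤ p := hp.two_le
  have he : 4 ≤ 2 * p := by omega
  obtain ⟨x, hx1, hxB, hx1B⟩ := AuxPf.rep_beads hμ h1
  obtain ⟨z, w, hz, hz1, hw, hzw⟩ := AuxPf.gap_beads hμ h2
  have hunb : ∀ x z w, x ∈ AuxPf.bset μ → x + 1 ∈ AuxPf.bset μ → z ∉ AuxPf.bset μ →
      z + 1 ∉ AuxPf.bset μ → w ∈ AuxPf.bset μ → z + 1 < w → z ≤ x + 1 := by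
    intro x' z' w' h1' h2' h3' h4' h5' h6'
    by_contra h
    push_neg at h
    exact hub (AuxPf.broken_of_beads hμ h1' h2' h3' h4' h5' h6' (by omega))
  obtain ⟨hcard, hmax⟩ := AuxPf.key_combinatorics (2 * p) he (AuxPf.bset μ)
    (fun b hb => AuxPf.bset_pos hμ hb)
    (AuxPf.star_of_core hμ hc)
    ⟨x, hxB, hx1B⟩ ⟨z, w, hz, hz1, hw, hzw⟩ hunb
  have hrcard : (AuxPf.bset μ).card = conj μ 1 := AuxPf.card_bset hμ
  have hr1 : 1 ≤ conj μ 1 := by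
    have hne : (AuxPf.bset μ).Nonempty := ⟨x, hxB⟩
    have := Finset.card_pos.2 hne
    omega
  constructor
  · have hmem : μ 1 + (conj μ 1 - 1) ∈ AuxPf.bset μ :=
      AuxPf.mem_bset.2 ⟨1, le_rfl, hr1, rfl⟩
    have := hmax _ hmem
    omega
  · omega
end

section
/- The set of unbroken doubly-singular 6-cores consists exactly of the ten partitions (2,2), (3,3), (2,2,2), (3,3,1), (3,2,2), (4,4), (3,3,2), (2,2,2,2), (3,3,3), (4,3,3,1). -/
/-- The partition (indexed from 1, with `μ 0 = 0`) given by a list of parts. -/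
def ofList (L : List ℕ) (i : ℕ) : ℕ := if i = 0 then 0 else L.getD (i - 1) 0

namespace SC

lemma ncard_Icc (a b : ℕ) : (Set.Icc a b).ncard = b + 1 - a := by
  rw [← Finset.coe_Icc, Set.ncard_coe_finset, Nat.card_Icc]

lemma dc_set (S : Set ℕ) (hf : S.Finite) (h1 : ∀ x ∈ S, 1 ≤ x)
    (hdc : ∀ x ∈ S, ∀ y, 1 ≤ y → y ≤ x → y ∈ S) :
    S = Set.Icc 1 S.ncard := by
  ext x
  simp only [Set.mem_Icc]
  constructor
  · intro hx
    refine ⟨h1 x hx, ?_⟩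
    have hsub : Set.Icc 1 x ⊆ S := fun y hy => hdc x hx y hy.1 hy.2
    have := Set.ncard_le_ncard hsub hf
    rw [ncard_Icc] at this
    omega
  · rintro ⟨hx1, hxc⟩
    by_contra hx
    have hsub : S ⊆ Set.Icc 1 (x - 1) := by
      intro y hy
      refine ⟨h1 y hy, ?_⟩
      by_contra hyx
      exact hx (hdc y hy x hx1 (by omega))
    have := Set.ncard_le_ncard hsub (Set.finite_Icc _ _)
    rw [ncard_Icc] at this
    omega

variable {μ : ℕ → ℕ}

lemma anti (hμ : IsPartition μ) : ∀ {a b : ℕ}, 1 ≤ a → a ≤ b → μ b ≤ μ a := by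
  intro a b ha hab
  induction b, hab using Nat.le_induction with
  | base => exact le_rfl
  | succ n hn ih => exact le_trans (hμ.2.1 n (ha.trans hn)) ih

lemma anti' (hμ : IsPartition μ) (a b : ℕ) (ha : 1 ≤ a) (hab : a ≤ b) : μ b ≤ μ a :=
  anti hμ ha hab

lemma conj_eq_ncard (μ : ℕ → ℕ) (j : ℕ) : conj μ j = {i | 1 ≤ i ∧ j ≤ μ i}.ncard := by
  rw [← Nat.card_coe_set_eq]; rfl

lemma galois (hμ : IsPartition μ) {i j : ℕ} (hi : 1 ≤ i) (hj : 1 ≤ j) :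
    j ≤ μ i ↔ i ≤ conj μ j := by
  obtain ⟨N, hN⟩ := hμ.2.2
  set S : Set ℕ := {x | 1 ≤ x ∧ j ≤ μ x} with hSdef
  have hf : S.Finite := by
    apply (Set.finite_Iio N).subset
    intro x hx
    simp only [Set.mem_Iio]
    by_contra h
    have := hN x (by omega)
    have := hx.2
    omega
  have hdc : ∀ x ∈ S, ∀ y, 1 ≤ y → y ≤ x → y ∈ S := by
    intro x hx y hy1 hyx
    exact ⟨hy1, le_trans hx.2 (anti hμ hy1 hyx)⟩
  have hS : S = Set.Icc 1 S.ncard := dc_set S hf (fun x hx => hx.1) hdc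
  have hc : conj μ j = S.ncard := conj_eq_ncard μ j
  constructor
  · intro h
    have h2 : i ∈ Set.Icc 1 S.ncard := hS ▸ (⟨hi, h⟩ : i ∈ S)
    rw [Set.mem_Icc] at h2
    omega
  · intro h
    have h2 : i ∈ S := by rw [hS, Set.mem_Icc]; exact ⟨hi, by omega⟩
    exact h2.2

lemma conj_anti (hμ : IsPartition μ) {j j' : ℕ} (hj : 1 ≤ j) (hjj : j ≤ j') :
    conj μ j' ≤ conj μ j := by
  rcases Nat.eq_zero_or_pos (conj μ j') with h | h
  · omega
  · have h1 : j' ≤ μ (conj μ j') := (galois hμ h (by omega)).2 le_rfl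
    exact (galois hμ h hj).1 (by omega)

lemma mu_pos (hμ : IsPartition μ) {i : ℕ} (hi : 1 ≤ i) (hit : i ≤ conj μ 1) : 1 ≤ μ i :=
  (galois hμ hi le_rfl).2 hit

lemma mu_zero (hμ : IsPartition μ) {i : ℕ} (hit : conj μ 1 < i) : μ i = 0 := by
  rcases Nat.eq_zero_or_pos i with h | h
  · rw [h]; exact hμ.1
  · by_contra hm
    have := (galois hμ h le_rfl).1 (by omega)
    omega

lemma conj_le (hμ : IsPartition μ) {j : ℕ} (hj : 1 ≤ j) : conj μ j ≤ conj μ 1 :=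
  conj_anti hμ le_rfl hj

lemma conj_mu_succ_lt (hμ : IsPartition μ) {i : ℕ} (hi : 1 ≤ i) : conj μ (μ i + 1) < i := by
  by_contra h
  have := (galois hμ (i := i) (j := μ i + 1) hi (by omega)).2 (by omega)
  omega

/-- the beta-set -/
def Bset (μ : ℕ → ℕ) (y : ℕ) : Prop :=
  ∃ i, 1 ≤ i ∧ i ≤ conj μ 1 ∧ μ i + conj μ 1 = y + i

lemma B_pos (hμ : IsPartition μ) {y : ℕ} (h : Bset μ y) : 1 ≤ y := by
  obtain ⟨i, h1, h2, he⟩ := h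
  have := mu_pos hμ h1 h2
  omega

lemma complement (hμ : IsPartition μ) :
    ∀ y, ¬ Bset μ y → ∃ j, 1 ≤ j ∧ y + 1 + conj μ j = j + conj μ 1 := by
  intro y
  induction y using Nat.strong_induction_on with
  | _ y ih =>
  intro hy
  rcases Nat.eq_zero_or_pos y with h0 | h0
  · exact ⟨1, le_rfl, by omega⟩
  by_cases hB : Bset μ (y - 1)
  · obtain ⟨i, hi1, hit, he⟩ := hB
    have hne : i = 1 ∨ (2 ≤ i ∧ μ i + 1 ≤ μ (i - 1)) := by
      by_cases hi2 : i = 1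
      · exact Or.inl hi2
      · have hle : μ i ≤ μ (i - 1) := anti hμ (by omega) (by omega)
        by_cases heq : μ (i - 1) = μ i
        · exact absurd ⟨i - 1, by omega, by omega, by omega⟩ hy
        · exact Or.inr ⟨by omega, by omega⟩
    have hlt : conj μ (μ i + 1) < i := conj_mu_succ_lt hμ hi1
    have hcj : conj μ (μ i + 1) = i - 1 := by
      rcases hne with h | h
      · omega
      · have := (galois hμ (i := i - 1) (j := μ i + 1) (by omega) (by omega)).1 h.2
        omega
    exact ⟨μ i + 1, by omega, by omega⟩
  · obtain ⟨j, hj1, he⟩ := ih (y - 1) (by omega) hB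
    by_cases hc0 : conj μ j = 0
    · have h2 : conj μ (j + 1) ≤ conj μ j := conj_anti hμ hj1 (by omega)
      exact ⟨j + 1, by omega, by omega⟩
    · have hc1 : 1 ≤ conj μ j := by omega
      have hmge : j ≤ μ (conj μ j) := (galois hμ hc1 hj1).2 le_rfl
      by_cases hm : μ (conj μ j) = j
      · exact absurd ⟨conj μ j, hc1, conj_le hμ hj1, by omega⟩ hy
      · have hup : conj μ j ≤ conj μ (j + 1) := (galois hμ hc1 (by omega)).1 (by omega)
        have hdn : conj μ (j + 1) ≤ conj μ j := conj_anti hμ hj1 (by omega)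
        exact ⟨j + 1, by omega, by omega⟩

lemma B_not_dvd (hμ : IsPartition μ) (hcore : IsECore 6 μ) {y : ℕ} (h : Bset μ y) :
    ¬ 6 ∣ y := by
  obtain ⟨i, h1, h2, he⟩ := h
  intro h6
  have hpos := mu_pos hμ h1 h2
  have hhook : hook μ i 1 = (y : ℤ) := by
    have hc : conj μ 1 = conj μ 1 := rfl
    unfold hook
    push_cast
    omega
  exact hcore i 1 ⟨h1, le_rfl, hpos⟩ (by rw [hhook]; exact_mod_cast Int.natCast_dvd_natCast.mpr h6)

lemma closure (hμ : IsPartition μ) (hcore : IsECore 6 μ) {y : ℕ} (h : Bset μ y) (hy : 7 ≤ y) :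
    Bset μ (y - 6) := by
  by_contra hB
  obtain ⟨j, hj1, hej⟩ := complement hμ (y - 6) hB
  obtain ⟨i, hi1, hit, he⟩ := h
  have hjm : j ≤ μ i := by
    by_contra hgt
    have h1 : conj μ j ≤ conj μ (μ i + 1) := conj_anti hμ (by omega) (by omega)
    have h2 : conj μ (μ i + 1) < i := conj_mu_succ_lt hμ hi1
    omega
  have hhook : hook μ i j = (6 : ℤ) := by
    unfold hook
    push_cast
    omega
  exact hcore i j ⟨hi1, hj1, hjm⟩ (by rw [hhook]; norm_num)

end SC

namespace SC

lemma Bof (hμ : IsPartition μ) {i : ℕ} (hi1 : 1 ≤ i) (hit : i ≤ conj μ 1) :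
    Bset μ (μ i + (conj μ 1 - i)) := ⟨i, hi1, hit, by omega⟩

lemma pair_row (hμ : IsPartition μ) {y : ℕ} (h : Bset μ y) (h' : Bset μ (y + 1)) :
    ∃ d, 2 ≤ d ∧ d ≤ conj μ 1 ∧ μ d + conj μ 1 = y + d ∧ μ (d - 1) = μ d ∧ 0 < μ d := by
  obtain ⟨i, hi1, hit, he⟩ := h
  obtain ⟨i', hi'1, hi't, he'⟩ := h'
  have hii : i' < i := by
    by_contra hcon
    have : μ i' ≤ μ i := anti' hμ i i' hi1 (by omega)
    omega
  have hd : i' = i - 1 := by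
    by_contra hcon
    have h1 : μ (i - 1) ≤ μ i' := anti' hμ i' (i - 1) hi'1 (by omega)
    have h2 : μ i ≤ μ (i - 1) := anti' hμ (i - 1) i (by omega) (by omega)
    omega
  subst hd
  refine ⟨i, by omega, hit, he, by omega, mu_pos hμ hi1 hit⟩

lemma sing_pair (hμ : IsPartition μ) (hs : TwoSingular μ) :
    ∃ y, Bset μ y ∧ Bset μ (y + 1) := by
  obtain ⟨i, hi1, hEq, hPos⟩ := hs
  have ht : i + 1 ≤ conj μ 1 := (galois hμ (by omega) le_rfl).1 (by omega)
  refine ⟨μ (i + 1) + (conj μ 1 - (i + 1)), ⟨i + 1, by omega, ht, by omega⟩,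
    ⟨i, hi1, by omega, by omega⟩⟩

lemma pair_reduce (hμ : IsPartition μ) (hcore : IsECore 6 μ) :
    ∀ p, Bset μ p → Bset μ (p + 1) → ∃ r, 1 ≤ r ∧ r ≤ 4 ∧ Bset μ r ∧ Bset μ (r + 1) := by
  intro p
  induction p using Nat.strong_induction_on with
  | _ p ih =>
  intro hp hp1
  by_cases h6 : p ≤ 5
  · have hpos := B_pos hμ hp
    have hne5 : p ≠ 5 := by
      intro h5
      rw [h5] at hp1
      exact B_not_dvd hμ hcore hp1 ⟨1, rfl⟩
    exact ⟨p, hpos, by omega, hp, hp1⟩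
  · have hnd := B_not_dvd hμ hcore hp
    have hp7 : 7 ≤ p := by
      rcases Nat.eq_or_lt_of_le (show 6 ≤ p by omega) with h | h
      · exact absurd ⟨1, by omega⟩ (h ▸ hnd)
      · omega
    have hb1 : Bset μ (p - 6) := closure hμ hcore hp (by omega)
    have hb2 : Bset μ (p - 6 + 1) := by
      have := closure hμ hcore hp1 (by omega)
      rwa [show p + 1 - 6 = p - 6 + 1 from by omega] at this
    obtain ⟨r, h1, h2, h3, h4⟩ := ih (p - 6) (by omega) hb1 hb2
    exact ⟨r, h1, h2, h3, h4⟩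

lemma conj_sing_struct (hμ : IsPartition μ) (h : TwoSingular (conj μ)) :
    2 ≤ μ (conj μ 1) ∨ ∃ c, 2 ≤ c ∧ c ≤ conj μ 1 ∧ μ c + 2 ≤ μ (c - 1) := by
  obtain ⟨j, hj1, hEq, hPos⟩ := h
  set c₀ := conj μ j with hc₀
  have hct : c₀ ≤ conj μ 1 := conj_le hμ hj1
  have hup : j + 1 ≤ μ c₀ := (galois hμ (i := c₀) (j := j + 1) (by omega) (by omega)).2 (by omega)
  have hdn : μ (c₀ + 1) < j := by
    by_contra hcon
    have := (galois hμ (i := c₀ + 1) (j := j) (by omega) hj1).1 (by omega)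
    omega
  rcases Nat.eq_or_lt_of_le hct with hEqT | hLt
  · left; rw [← hEqT]; omega
  · refine Or.inr ⟨c₀ + 1, by omega, by omega, ?_⟩
    simp only [Nat.add_sub_cancel]
    omega

lemma caseA_bound (hμ : IsPartition μ) (hcore : IsECore 6 μ) (hnb : ¬ Broken μ)
    (h1 : ¬ Bset μ 1) (hr : ∃ r, 1 ≤ r ∧ r ≤ 4 ∧ Bset μ r ∧ Bset μ (r + 1)) :
    ∀ y, Bset μ y → y ≤ 5 := by
  intro y
  induction y using Nat.strong_induction_on with
  | _ y ih =>
  intro hy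
  by_contra hy6
  have hnd := B_not_dvd hμ hcore hy
  have hy7 : 7 ≤ y := by
    rcases Nat.eq_or_lt_of_le (show 6 ≤ y by omega) with h | h
    · exact absurd ⟨1, by omega⟩ (h ▸ hnd)
    · omega
  have hy8 : 8 ≤ y := by
    rcases Nat.eq_or_lt_of_le hy7 with h | h
    · have h7 := closure hμ hcore hy (by omega)
      rw [← h] at h7
      norm_num at h7
      exact absurd h7 h1
    · omega
  obtain ⟨k, hk1, hkt, hek⟩ := closure hμ hcore hy (by omega)
  obtain ⟨i, hi1, hit, hei⟩ := hy
  have hilt : i < conj μ 1 := by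
    by_contra hcon
    have hkμ : μ i ≤ μ k := anti' hμ k i hk1 (by omega)
    omega
  have hB2 : Bset μ (μ (i + 1) + (conj μ 1 - (i + 1))) := Bof hμ (by omega) (by omega)
  set y2 := μ (i + 1) + (conj μ 1 - (i + 1)) with hy2
  have hstep : μ (i + 1) ≤ μ i := anti' hμ i (i + 1) hi1 (by omega)
  have hy2lt : y2 < y := by omega
  by_cases hclose : y ≤ y2 + 2
  · have := ih y2 hy2lt hB2
    omega
  · obtain ⟨r, hr1, hr4, hBr, hBr1⟩ := hr
    obtain ⟨d, hd2, hdt, hed, hdeq, hdpos⟩ := pair_row hμ hBr hBr1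
    rcases lt_trichotomy d (i + 1) with hlt | heq | hgt
    · have : μ i ≤ μ d := anti' hμ d i (by omega) (by omega)
      omega
    · rw [heq] at hdeq
      simp only [Nat.add_sub_cancel] at hdeq
      omega
    · refine hnb ⟨i + 1, d, by omega, hgt, ?_, hdeq, hdpos⟩
      simp only [Nat.add_sub_cancel]
      omega

end SC

namespace SC

lemma eq_ofList (hμ : IsPartition μ) (L : List ℕ)
    (hlen : conj μ 1 = L.length)
    (hv : ∀ i, 1 ≤ i → i ≤ L.length → μ i = L.getD (i - 1) 0) : μ = ofList L := by
  funext i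
  unfold ofList
  by_cases h0 : i = 0
  · rw [h0, if_pos rfl]; exact hμ.1
  · rw [if_neg h0]
    by_cases hL : i ≤ L.length
    · exact hv i (by omega) hL
    · rw [mu_zero hμ (by omega), List.getD_eq_default _ _ (by omega)]

lemma caseA_final (hμ : IsPartition μ) (hcore : IsECore 6 μ) (hnb : ¬ Broken μ)
    {r : ℕ} (hr1 : 1 ≤ r) (hr4 : r ≤ 4) (hBr : Bset μ r) (hBr1 : Bset μ (r + 1))
    (hlast : 2 ≤ μ (conj μ 1)) :
    μ = ofList [2,2] ∨ μ = ofList [3,3] ∨ μ = ofList [2,2,2] ∨ μ = ofList [3,2,2] ∨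
    μ = ofList [4,4] ∨ μ = ofList [3,3,2] ∨ μ = ofList [2,2,2,2] ∨ μ = ofList [3,3,3] := by
  have h1 : ¬ Bset μ 1 := by
    rintro ⟨i, hi1, hit, he⟩
    have hpos := mu_pos hμ hi1 hit
    have hie : i = conj μ 1 := by omega
    rw [hie] at he
    omega
  have hb5 := caseA_bound hμ hcore hnb h1 ⟨r, hr1, hr4, hBr, hBr1⟩
  obtain ⟨d, hd2, hdt, hed, hdeq, hdpos⟩ := pair_row hμ hBr hBr1
  have ht2 : 2 ≤ conj μ 1 := le_trans hd2 hdt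
  have hmu1 : μ (conj μ 1) ≤ μ 1 := anti' hμ 1 (conj μ 1) le_rfl (by omega)
  have hb1 : μ 1 + (conj μ 1 - 1) ≤ 5 := hb5 _ (Bof hμ le_rfl (by omega))
  have h12 : μ 2 ≤ μ 1 := anti' hμ 1 2 le_rfl (by omega)
  have hT : conj μ 1 = 2 ∨ conj μ 1 = 3 ∨ conj μ 1 = 4 := by omega
  rcases hT with ht | ht | ht
  · -- t = 2
    rw [ht] at hlast hdt hed hmu1
    have hd : d = 2 := by omega
    rw [hd] at hdeq
    norm_num at hdeq
    have hv : μ 1 = 2 ∨ μ 1 = 3 ∨ μ 1 = 4 := by rw [ht] at hb1; omega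
    rcases hv with h | h | h
    · refine Or.inl (eq_ofList hμ [2,2] ht ?_)
      intro i hi1 hi2
      norm_num at hi2
      interval_cases i <;> simp <;> omega
    · refine Or.inr (Or.inl (eq_ofList hμ [3,3] ht ?_))
      intro i hi1 hi2
      norm_num at hi2
      interval_cases i <;> simp <;> omega
    · refine Or.inr (Or.inr (Or.inr (Or.inr (Or.inl (eq_ofList hμ [4,4] ht ?_)))))
      intro i hi1 hi2
      norm_num at hi2
      interval_cases i <;> simp <;> omega
  · -- t = 3
    rw [ht] at hlast hmu1 hb1
    have h23 : μ 3 ≤ μ 2 := anti' hμ 2 3 (by omega) (by omega)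
    have hval : (μ 1 = 2 ∧ μ 2 = 2 ∧ μ 3 = 2) ∨ (μ 1 = 3 ∧ μ 2 = 2 ∧ μ 3 = 2) ∨
        (μ 1 = 3 ∧ μ 2 = 3 ∧ μ 3 = 2) ∨ (μ 1 = 3 ∧ μ 2 = 3 ∧ μ 3 = 3) := by omega
    rcases hval with ⟨a, b, c⟩ | ⟨a, b, c⟩ | ⟨a, b, c⟩ | ⟨a, b, c⟩
    · refine Or.inr (Or.inr (Or.inl (eq_ofList hμ [2,2,2] ht ?_)))
      intro i hi1 hi2
      norm_num at hi2
      interval_cases i <;> simp <;> omega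
    · refine Or.inr (Or.inr (Or.inr (Or.inl (eq_ofList hμ [3,2,2] ht ?_))))
      intro i hi1 hi2
      norm_num at hi2
      interval_cases i <;> simp <;> omega
    · refine Or.inr (Or.inr (Or.inr (Or.inr (Or.inr (Or.inl (eq_ofList hμ [3,3,2] ht ?_))))))
      intro i hi1 hi2
      norm_num at hi2
      interval_cases i <;> simp <;> omega
    · refine Or.inr (Or.inr (Or.inr (Or.inr (Or.inr (Or.inr (Or.inr (eq_ofList hμ [3,3,3] ht ?_)))))))
      intro i hi1 hi2
      norm_num at hi2
      interval_cases i <;> simp <;> omega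
  · -- t = 4
    rw [ht] at hlast hmu1 hb1
    have h23 : μ 3 ≤ μ 2 := anti' hμ 2 3 (by omega) (by omega)
    have h34 : μ 4 ≤ μ 3 := anti' hμ 3 4 (by omega) (by omega)
    refine Or.inr (Or.inr (Or.inr (Or.inr (Or.inr (Or.inr (Or.inl (eq_ofList hμ [2,2,2,2] ht ?_)))))))
    intro i hi1 hi2
    norm_num at hi2
    interval_cases i <;> simp <;> omega

end SC

namespace SC

lemma caseB_bound (hμ : IsPartition μ) (hcore : IsECore 6 μ) (hnb : ¬ Broken μ)
    (h2 : ¬ Bset μ 2) (h3 : ¬ Bset μ 3) {d : ℕ}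
    (hd2 : 2 ≤ d) (hdt : d ≤ conj μ 1) (hed : μ d + conj μ 1 = 4 + d)
    (hdeq : μ (d - 1) = μ d) (hdpos : 0 < μ d) :
    ∀ y, Bset μ y → y ≤ 7 := by
  intro y
  induction y using Nat.strong_induction_on with
  | _ y ih =>
  intro hy
  by_contra hy8'
  have hy8 : 8 ≤ y := by omega
  have hy10 : 10 ≤ y := by
    by_contra hcon
    have hc := closure hμ hcore hy (by omega)
    have hnd := B_not_dvd hμ hcore hy
    have : y - 6 = 2 ∨ y - 6 = 3 := by omega
    rcases this with h | h
    · rw [h] at hc; exact h2 hc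
    · rw [h] at hc; exact h3 hc
  obtain ⟨i, hi1, hit, hei⟩ := hy
  have hid : i + 1 < d := by
    by_contra hcon
    have ha : μ i ≤ μ (d - 1) := anti' hμ (d - 1) i (by omega) (by omega)
    omega
  have hB2 : Bset μ (μ (i + 1) + (conj μ 1 - (i + 1))) := Bof hμ (by omega) (by omega)
  have hstep : μ (i + 1) ≤ μ i := anti' hμ i (i + 1) hi1 (by omega)
  have h7 : μ (i + 1) + (conj μ 1 - (i + 1)) ≤ 7 := ih _ (by omega) hB2
  refine hnb ⟨i + 1, d, by omega, by omega, ?_, hdeq, hdpos⟩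
  simp only [Nat.add_sub_cancel]
  omega

lemma caseB_final (hμ : IsPartition μ) (hcore : IsECore 6 μ) (hnb : ¬ Broken μ)
    {r : ℕ} (hr1 : 1 ≤ r) (hr4 : r ≤ 4) (hBr : Bset μ r) (hBr1 : Bset μ (r + 1))
    {c : ℕ} (hc2 : 2 ≤ c) (hct : c ≤ conj μ 1) (hgap : μ c + 2 ≤ μ (c - 1)) :
    μ = ofList [3,3,1] ∨ μ = ofList [4,3,3,1] := by
  obtain ⟨d, hd2, hdt, hed, hdeq, hdpos⟩ := pair_row hμ hBr hBr1
  -- unbroken: d ≤ c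
  have hdc : d ≤ c := by
    by_contra hcon
    exact hnb ⟨c, d, by omega, by omega, by omega, hdeq, hdpos⟩
  have hμcd : μ c ≤ μ d := anti' hμ d c (by omega) hdc
  have hμc : 1 ≤ μ c := mu_pos hμ (by omega) hct
  -- r = 4, b_c = 1, b_{c-1} = 4
  have hne : ¬ (μ c + conj μ 1 = r + c) := by
    intro heq
    have hcd : c = d := by omega
    rw [← hcd] at hdeq
    omega
  have hdc1 : d ≤ c - 1 := by
    by_contra hcon
    have hcd : c = d := by omega
    exact hne (by rw [hcd]; exact hed)
  have hμc1d : μ (c - 1) ≤ μ d := anti' hμ d (c - 1) (by omega) hdc1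
  -- b_{c-1} ≤ r and b_{c-1} ≥ b_c + 3, b_c ≥ 1 ⟹ values
  have hr4' : r = 4 := by omega
  have hbc1 : μ (c - 1) + conj μ 1 = 4 + (c - 1) := by omega
  have hbc : μ c + conj μ 1 = 1 + c := by omega
  have hceq : c = conj μ 1 := by omega
  have hd_eq : d = c - 1 := by omega
  -- exclude 2 and 3 from B
  have h2 : ¬ Bset μ 2 := by
    rintro ⟨k, hk1, hkt, hek⟩
    have hkc : k < c := by
      by_contra hcon
      have := anti' hμ c k (by omega) (by omega)
      omega
    have := anti' hμ k (c - 1) hk1 (by omega)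
    omega
  have h3 : ¬ Bset μ 3 := by
    rintro ⟨k, hk1, hkt, hek⟩
    have hkc : k < c := by
      by_contra hcon
      have := anti' hμ c k (by omega) (by omega)
      omega
    have := anti' hμ k (c - 1) hk1 (by omega)
    omega
  have hbnd := caseB_bound hμ hcore hnb h2 h3 hd2 hdt (by omega) hdeq hdpos
  -- d ≤ 3
  have hd3 : d ≤ 3 := by
    by_contra hcon
    have hb2 : Bset μ (μ (d - 2) + (conj μ 1 - (d - 2))) := Bof hμ (by omega) (by omega)
    have hs1 : μ (d - 1) ≤ μ (d - 2) := anti' hμ (d - 2) (d - 1) (by omega) (by omega)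
    have hnd := B_not_dvd hμ hcore hb2
    have h7 := hbnd _ hb2
    have hv : μ (d - 2) + (conj μ 1 - (d - 2)) = 7 := by omega
    have hb3 : Bset μ (μ (d - 3) + (conj μ 1 - (d - 3))) := Bof hμ (by omega) (by omega)
    have hs2 : μ (d - 2) ≤ μ (d - 3) := anti' hμ (d - 3) (d - 2) (by omega) (by omega)
    have h7' := hbnd _ hb3
    omega
  have hdv : d = 2 ∨ d = 3 := by omega
  rcases hdv with hd | hd
  · left
    subst hd
    have hc3 : c = 3 := by omega
    subst hc3
    norm_num at hdeq hbc1 hbc hed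
    refine eq_ofList hμ [3,3,1] (by simp; omega) ?_
    intro i hi1 hi2
    norm_num at hi2
    interval_cases i <;> simp <;> omega
  · right
    subst hd
    have hc4 : c = 4 := by omega
    subst hc4
    norm_num at hdeq hbc1 hbc hed
    have hb1 : Bset μ (μ 1 + (conj μ 1 - 1)) := Bof hμ le_rfl (by omega)
    have h7 := hbnd _ hb1
    have hnd := B_not_dvd hμ hcore hb1
    have h12 : μ 2 ≤ μ 1 := anti' hμ 1 2 le_rfl (by omega)
    refine eq_ofList hμ [4,3,3,1] (by simp; omega) ?_
    intro i hi1 hi2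
    norm_num at hi2
    interval_cases i <;> simp <;> omega

end SC

namespace SC

lemma ofList_zero_of_gt (L : List ℕ) {i : ℕ} (h : L.length < i) : ofList L i = 0 := by
  unfold ofList
  rw [if_neg (by omega), List.getD_eq_default _ _ (by omega)]

lemma getD_count {j : ℕ} (hj : 1 ≤ j) :
    ∀ L : List ℕ, L.Pairwise (· ≥ ·) → ∀ m, (j ≤ L.getD m 0 ↔ m < L.countP (fun x => decide (j ≤ x))) := by
  intro L
  induction L with
  | nil =>
    intro _ m
    simp [List.getD]
    omega
  | cons a tl ih =>
    intro hs m
    rw [List.pairwise_cons] at hs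
    have hcnt : ¬ j ≤ a → tl.countP (fun x => decide (j ≤ x)) = 0 := by
      intro hja
      rw [List.countP_eq_zero]
      intro x hx
      simpa using by have := hs.1 x hx; omega
    cases m with
    | zero =>
      simp only [List.getD_cons_zero, List.countP_cons]
      by_cases hja : j ≤ a
      · simp [hja]
      · simp [hja, hcnt hja]
    | succ m =>
      simp only [List.getD_cons_succ, List.countP_cons]
      rw [ih hs.2 m]
      by_cases hja : j ≤ a
      · simp [hja]
      · simp [hja, hcnt hja]

lemma conj_ofList (L : List ℕ) (hL : L.Pairwise (· ≥ ·)) {j : ℕ} (hj : 1 ≤ j) :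
    conj (ofList L) j = L.countP (fun x => decide (j ≤ x)) := by
  rw [conj_eq_ncard]
  have hset : {i : ℕ | 1 ≤ i ∧ j ≤ ofList L i} =
      Set.Icc 1 (L.countP (fun x => decide (j ≤ x))) := by
    ext i
    simp only [Set.mem_setOf_eq, Set.mem_Icc]
    constructor
    · rintro ⟨hi1, hle⟩
      unfold ofList at hle
      rw [if_neg (by omega)] at hle
      have := (getD_count hj L hL (i - 1)).1 hle
      exact ⟨hi1, by omega⟩
    · rintro ⟨hi1, hle⟩
      refine ⟨hi1, ?_⟩
      unfold ofList
      rw [if_neg (by omega)]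
      exact (getD_count hj L hL (i - 1)).2 (by omega)
  rw [hset, ncard_Icc]
  omega

lemma not_broken_of (L : List ℕ) (hlen : L.length ≤ 4)
    (h : ∀ c ∈ Finset.Icc 2 4, ∀ d ∈ Finset.Icc 3 4,
      ¬(c < d ∧ ofList L c + 1 < ofList L (c - 1) ∧ ofList L (d - 1) = ofList L d ∧
        0 < ofList L d)) :
    ¬ Broken (ofList L) := by
  rintro ⟨c, d, hc, hcd, hgap, heq, hpos⟩
  have hd : d ≤ L.length := by
    by_contra hcon
    rw [ofList_zero_of_gt _ (by omega)] at hpos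
    omega
  exact h c (Finset.mem_Icc.mpr (by omega)) d (Finset.mem_Icc.mpr (by omega))
    ⟨hcd, hgap, heq, hpos⟩

lemma ecore_of (L : List ℕ) (hL : L.Pairwise (· ≥ ·)) (hlen : L.length ≤ 4)
    (hmax : L.getD 0 0 ≤ 4)
    (h : ∀ i : ℕ, i ∈ Finset.Icc 1 4 → ∀ j : ℕ, j ∈ Finset.Icc 1 4 → j ≤ ofList L i →
      ¬ (6 : ℤ) ∣ (1 + (ofList L i : ℤ) - (j : ℤ) +
        (L.countP (fun x => decide (j ≤ x)) : ℤ) - (i : ℤ))) :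
    IsECore 6 (ofList L) := by
  rintro i j ⟨hi1, hj1, hjle⟩
  have hil : i ≤ L.length := by
    by_contra hcon
    rw [ofList_zero_of_gt _ (by omega)] at hjle
    omega
  have hgd : j ≤ L.getD (i - 1) 0 := by
    unfold ofList at hjle
    rwa [if_neg (by omega)] at hjle
  have h0 : 0 < L.countP (fun x => decide (j ≤ x)) :=
    by have := (getD_count hj1 L hL (i - 1)).1 hgd; omega
  have hj4 : j ≤ 4 := by
    have h00 := (getD_count hj1 L hL 0).2 (by omega)
    omega
  unfold hook
  rw [conj_ofList L hL hj1]
  exact h i (Finset.mem_Icc.mpr ⟨hi1, by omega⟩) j (Finset.mem_Icc.mpr ⟨hj1, hj4⟩) hjle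

end SC

namespace SC

lemma forward (hμ : IsPartition μ) (hs : TwoSingular μ) (hcs : TwoSingular (conj μ))
    (hnb : ¬ Broken μ) (hcore : IsECore 6 μ) :
    μ = ofList [2,2] ∨ μ = ofList [3,3] ∨ μ = ofList [2,2,2] ∨ μ = ofList [3,3,1] ∨
    μ = ofList [3,2,2] ∨ μ = ofList [4,4] ∨ μ = ofList [3,3,2] ∨ μ = ofList [2,2,2,2] ∨
    μ = ofList [3,3,3] ∨ μ = ofList [4,3,3,1] := by
  obtain ⟨y0, hy0, hy01⟩ := sing_pair hμ hs
  obtain ⟨r, hr1, hr4, hBr, hBr1⟩ := pair_reduce hμ hcore y0 hy0 hy01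
  rcases conj_sing_struct hμ hcs with hlast | ⟨c, hc2, hct, hgap⟩
  · have := caseA_final hμ hcore hnb hr1 hr4 hBr hBr1 hlast
    tauto
  · have := caseB_final hμ hcore hnb hr1 hr4 hBr hBr1 hc2 hct hgap
    tauto

lemma backward_all (L : List ℕ) (hL : L.Pairwise (· ≥ ·)) (hlen : L.length ≤ 4)
    (hmax : L.getD 0 0 ≤ 4) (i₀ j₀ : ℕ) (hi₀ : 1 ≤ i₀) (hj₀ : 1 ≤ j₀)
    (hsw : ofList L i₀ = ofList L (i₀ + 1) ∧ 0 < ofList L i₀)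
    (hcw : L.countP (fun x => decide (j₀ ≤ x)) = L.countP (fun x => decide (j₀ + 1 ≤ x)) ∧
      0 < L.countP (fun x => decide (j₀ ≤ x)))
    (hnb : ∀ c ∈ Finset.Icc 2 4, ∀ d ∈ Finset.Icc 3 4,
      ¬(c < d ∧ ofList L c + 1 < ofList L (c - 1) ∧ ofList L (d - 1) = ofList L d ∧
        0 < ofList L d))
    (hcr : ∀ i : ℕ, i ∈ Finset.Icc 1 4 → ∀ j : ℕ, j ∈ Finset.Icc 1 4 → j ≤ ofList L i →
      ¬ (6 : ℤ) ∣ (1 + (ofList L i : ℤ) - (j : ℤ) +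
        (L.countP (fun x => decide (j ≤ x)) : ℤ) - (i : ℤ))) :
    TwoSingular (ofList L) ∧ TwoSingular (conj (ofList L)) ∧ ¬ Broken (ofList L) ∧
      IsECore 6 (ofList L) := by
  refine ⟨⟨i₀, hi₀, hsw.1, hsw.2⟩, ⟨j₀, hj₀, ?_, ?_⟩, not_broken_of L hlen hnb,
    ecore_of L hL hlen hmax hcr⟩
  · rw [conj_ofList L hL hj₀, conj_ofList L hL (by omega : 1 ≤ j₀ + 1)]
    exact hcw.1
  · rw [conj_ofList L hL hj₀]
    exact hcw.2

end SC


/-- The unbroken doubly-singular 6-cores are exactly the ten listed partitions. -/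
theorem six_core_classification (μ : ℕ → ℕ) (hμ : IsPartition μ) :
    (TwoSingular μ ∧ TwoSingular (conj μ) ∧ ¬ Broken μ ∧ IsECore 6 μ) ↔
      μ ∈ ({ofList [2, 2], ofList [3, 3], ofList [2, 2, 2], ofList [3, 3, 1],
            ofList [3, 2, 2], ofList [4, 4], ofList [3, 3, 2], ofList [2, 2, 2, 2],
            ofList [3, 3, 3], ofList [4, 3, 3, 1]} : Set (ℕ → ℕ)) := by
  constructor
  · rintro ⟨hs, hcs, hnb, hcore⟩
    have h := SC.forward hμ hs hcs hnb hcore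
    simp only [Set.mem_insert_iff, Set.mem_singleton_iff]
    tauto
  · intro hmem
    simp only [Set.mem_insert_iff, Set.mem_singleton_iff] at hmem
    rcases hmem with h|h|h|h|h|h|h|h|h|h <;> subst h
    · exact SC.backward_all [2,2] (by decide) (by decide) (by decide) 1 1 le_rfl le_rfl
        (by decide) (by decide) (by decide) (by decide)
    · exact SC.backward_all [3,3] (by decide) (by decide) (by decide) 1 1 le_rfl le_rfl
        (by decide) (by decide) (by decide) (by decide)
    · exact SC.backward_all [2,2,2] (by decide) (by decide) (by decide) 1 1 le_rfl le_rfl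
        (by decide) (by decide) (by decide) (by decide)
    · exact SC.backward_all [3,3,1] (by decide) (by decide) (by decide) 1 2 le_rfl (by omega)
        (by decide) (by decide) (by decide) (by decide)
    · exact SC.backward_all [3,2,2] (by decide) (by decide) (by decide) 2 1 (by omega) le_rfl
        (by decide) (by decide) (by decide) (by decide)
    · exact SC.backward_all [4,4] (by decide) (by decide) (by decide) 1 1 le_rfl le_rfl
        (by decide) (by decide) (by decide) (by decide)
    · exact SC.backward_all [3,3,2] (by decide) (by decide) (by decide) 1 1 le_rfl le_rfl
        (by decide) (by decide) (by decide) (by decide)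
    · exact SC.backward_all [2,2,2,2] (by decide) (by decide) (by decide) 1 1 le_rfl le_rfl
        (by decide) (by decide) (by decide) (by decide)
    · exact SC.backward_all [3,3,3] (by decide) (by decide) (by decide) 1 1 le_rfl le_rfl
        (by decide) (by decide) (by decide) (by decide)
    · exact SC.backward_all [4,3,3,1] (by decide) (by decide) (by decide) 2 2 (by omega) (by omega)
        (by decide) (by decide) (by decide) (by decide)
end
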